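/- arXiv:0809.2420 — 5 statements merged into one kernel-verified Lean document; each statement's English description precedes it below -/
import Mathlib

section
/- Let f be an integrable complex-valued function on the unit circle, let n ≥ 1 and ℓ ≥ 1, and suppose D_j(f) ≠ 0 for all j with n ≤ j ≤ n+ℓ−1, so that the monic orthogonal polynomials Φ_n, Φ_{n+1}, …, Φ_{n+ℓ−1} with respect to f exist. Then D_n(z^ℓ f(z)) = ((−1)^{ℓ n} / Π_{j=1}^{ℓ−1} j!) · F_n · D_n(f), where F_n is the determinant of the ℓ×ℓ matrix whose (i,j) entry (i,j = 0,…,ℓ−1) is (d^i/dz^i) Φ_{n+j}(z) evaluated at z = 0. -/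
open Complex Real Filter Finset

noncomputable section

/-- The `k`-th Fourier coefficient of a function on the unit circle,
given as a function of the angle `θ`. -/
def fCoeff (h : ℝ → ℂ) (k : ℤ) : ℂ :=
  (1 / (2 * (Real.pi : ℂ))) *
    ∫ θ in (0:ℝ)..(2 * Real.pi), h θ * Complex.exp (-Complex.I * k * θ)

/-- The `n`-dimensional Toeplitz determinant `D_n(h)`. -/
def toeplitzDet (h : ℝ → ℂ) (n : ℕ) : ℂ :=
  Matrix.det (Matrix.of fun j k : Fin n => fCoeff h ((j : ℤ) - (k : ℤ)))

/-- `P` is the monic orthogonal polynomial `Φ_k` of degree `k` for the weight `f`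
on the unit circle. -/
def IsMonicOPUC (f : ℝ → ℂ) (k : ℕ) (P : Polynomial ℂ) : Prop :=
  P.Monic ∧ P.degree = k ∧
  ∀ j : ℕ, j < k →
    (1 / (2 * (Real.pi : ℂ))) * (∫ θ in (0:ℝ)..(2 * Real.pi),
        P.eval (Complex.exp (Complex.I * θ)) * Complex.exp (-Complex.I * j * θ) * f θ) = 0

/-- `Q` is the monic reversed orthogonal polynomial `Φ̂_k` of degree `k` for the
weight `f` on the unit circle. -/
def IsMonicOPUCRev (f : ℝ → ℂ) (k : ℕ) (Q : Polynomial ℂ) : Prop :=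
  Q.Monic ∧ Q.degree = k ∧
  ∀ j : ℕ, j < k →
    (1 / (2 * (Real.pi : ℂ))) * (∫ θ in (0:ℝ)..(2 * Real.pi),
        Q.eval (Complex.exp (-Complex.I * θ)) * Complex.exp (Complex.I * j * θ) * f θ) = 0

section aux

lemma twoPiNe : (2 * (Real.pi : ℂ)) ≠ 0 := by
  simp [Real.pi_ne_zero, Complex.ofReal_ne_zero]

lemma fCoeff_shift (f : ℝ → ℂ) (ℓ : ℕ) (m : ℤ) :
    fCoeff (fun θ => Complex.exp (Complex.I * ℓ * θ) * f θ) m = fCoeff f (m - ℓ) := by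
  unfold fCoeff
  congr 1
  apply intervalIntegral.integral_congr
  intro θ _
  simp only
  rw [mul_comm (Complex.exp _) (f θ), mul_assoc, ← Complex.exp_add]
  congr 2
  push_cast
  ring

lemma integral_eq_fCoeff (f : ℝ → ℂ) (k : ℤ) :
    (∫ θ in (0:ℝ)..(2 * Real.pi), f θ * Complex.exp (-Complex.I * k * θ))
      = 2 * (Real.pi : ℂ) * fCoeff f k := by
  rw [fCoeff, ← mul_assoc, mul_one_div, div_self twoPiNe, one_mul]

lemma orth_sum (f : ℝ → ℂ)
    (hf : IntervalIntegrable f MeasureTheory.volume 0 (2 * Real.pi))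
    {m : ℕ} {P : Polynomial ℂ} (h : IsMonicOPUC f m P) {j : ℕ} (hj : j < m) :
    ∑ p ∈ Finset.range (m + 1), fCoeff f ((j : ℤ) - (p : ℕ)) * P.coeff p = 0 := by
  have hI : (∫ θ in (0:ℝ)..(2 * Real.pi),
      P.eval (Complex.exp (Complex.I * θ)) * Complex.exp (-Complex.I * j * θ) * f θ) = 0 := by
    have h0 := h.2.2 j hj
    rcases mul_eq_zero.mp h0 with h1 | h1
    · exact absurd h1 (by simp [Real.pi_ne_zero])
    · exact h1
  have hnd : P.natDegree < m + 1 := by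
    rw [Polynomial.natDegree_eq_of_degree_eq_some h.2.1]; omega
  have hint : ∀ p ∈ Finset.range (m+1), IntervalIntegrable
      (fun θ : ℝ => P.coeff p * (f θ * Complex.exp (-Complex.I * ((((j:ℤ) - (p:ℤ)) : ℤ) : ℂ) * θ)))
      MeasureTheory.volume 0 (2 * Real.pi) := by
    intro p _
    apply IntervalIntegrable.const_mul
    apply hf.mul_continuousOn
    apply Continuous.continuousOn
    exact Complex.continuous_exp.comp (by continuity)
  have hsplit : (∫ θ in (0:ℝ)..(2 * Real.pi),
      P.eval (Complex.exp (Complex.I * θ)) * Complex.exp (-Complex.I * j * θ) * f θ)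
      = ∑ p ∈ Finset.range (m + 1),
          P.coeff p * (2 * (Real.pi : ℂ) * fCoeff f ((j : ℤ) - (p:ℕ))) := by
    calc (∫ θ in (0:ℝ)..(2 * Real.pi),
        P.eval (Complex.exp (Complex.I * θ)) * Complex.exp (-Complex.I * j * θ) * f θ)
        = ∫ θ in (0:ℝ)..(2 * Real.pi), ∑ p ∈ Finset.range (m + 1),
            P.coeff p * (f θ * Complex.exp (-Complex.I * ((((j:ℤ) - (p:ℤ)) : ℤ) : ℂ) * θ)) := by
          apply intervalIntegral.integral_congr
          intro θ _
          dsimp only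
          rw [Polynomial.eval_eq_sum_range' hnd, Finset.sum_mul, Finset.sum_mul]
          apply Finset.sum_congr rfl
          intro p _
          have he : Complex.exp (↑p * (Complex.I * ↑θ)) * Complex.exp (-Complex.I * ↑j * ↑θ)
              = Complex.exp (-Complex.I * ((((j:ℤ) - (p:ℤ)) : ℤ) : ℂ) * ↑θ) := by
            rw [← Complex.exp_add]; congr 1; push_cast; ring
          calc P.coeff p * Complex.exp (Complex.I * ↑θ) ^ p * Complex.exp (-Complex.I * ↑j * ↑θ) * f θ
              = P.coeff p * (f θ * (Complex.exp (↑p * (Complex.I * ↑θ)) *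
                  Complex.exp (-Complex.I * ↑j * ↑θ))) := by
                rw [← Complex.exp_nat_mul]; ring
            _ = P.coeff p * (f θ * Complex.exp (-Complex.I * ((((j:ℤ) - (p:ℤ)) : ℤ) : ℂ) * ↑θ)) := by
                rw [he]
      _ = ∑ p ∈ Finset.range (m + 1), ∫ θ in (0:ℝ)..(2 * Real.pi),
            P.coeff p * (f θ * Complex.exp (-Complex.I * ((((j:ℤ) - (p:ℤ)) : ℤ) : ℂ) * θ)) :=
          intervalIntegral.integral_finset_sum hint
      _ = ∑ p ∈ Finset.range (m + 1),
            P.coeff p * (2 * (Real.pi : ℂ) * fCoeff f ((j : ℤ) - (p:ℕ))) := by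
          apply Finset.sum_congr rfl
          intro p _
          rw [intervalIntegral.integral_const_mul, integral_eq_fCoeff]
  have h2 : (2 * (Real.pi : ℂ)) * ∑ p ∈ Finset.range (m + 1), fCoeff f ((j : ℤ) - (p:ℕ)) * P.coeff p
      = ∑ p ∈ Finset.range (m + 1),
          P.coeff p * (2 * (Real.pi : ℂ) * fCoeff f ((j : ℤ) - (p:ℕ))) := by
    rw [Finset.mul_sum]
    apply Finset.sum_congr rfl
    intro p _
    ring
  have h3 := h2.trans (hsplit ▸ hI)
  rcases mul_eq_zero.mp h3 with h4 | h4
  · exact absurd h4 twoPiNe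
  · exact h4

def momEquiv (n ℓ : ℕ) : (Fin n ⊕ Fin ℓ) ≃ Fin (n + ℓ) where
  toFun x := Sum.elim (fun k : Fin n => ⟨(k : ℕ) + ℓ, by omega⟩)
    (fun r : Fin ℓ => ⟨(r : ℕ), by omega⟩) x
  invFun q := if h : (q : ℕ) < ℓ then Sum.inr ⟨(q : ℕ), h⟩
    else Sum.inl ⟨(q : ℕ) - ℓ, by have := q.isLt; omega⟩
  left_inv := by
    rintro (k | r)
    · have : ¬ ((k : ℕ) + ℓ < ℓ) := by omega
      simp [this]
    · simp
  right_inv := by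
    intro q
    by_cases h : (q : ℕ) < ℓ
    · simp [h]
    · simp [h, Fin.ext_iff]
      omega

lemma finRotate_pow_apply (m k : ℕ) (q : Fin (m + 1)) :
    ((((finRotate (m + 1)) ^ k) q : Fin (m+1)) : ℕ) = ((q : ℕ) + k) % (m + 1) := by
  induction k with
  | zero => simp [Nat.mod_eq_of_lt q.isLt]
  | succ k ih =>
      rw [pow_succ', Equiv.Perm.mul_apply]
      conv_rhs => rw [show (q:ℕ) + (k+1) = ((q:ℕ) + k) + 1 by ring]
      rw [Nat.add_mod ((q:ℕ) + k) 1, ← ih, finRotate_succ_apply, Fin.val_add, Fin.val_one']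

lemma sign_rotation {N k : ℕ} (hN : 0 < N) (σ : Equiv.Perm (Fin N))
    (hσ : ∀ q : Fin N, ((σ q : Fin N) : ℕ) = ((q : ℕ) + k) % N) :
    Equiv.Perm.sign σ = (-1 : ℤˣ) ^ ((N - 1) * k) := by
  obtain ⟨m, rfl⟩ : ∃ m, N = m + 1 := ⟨N - 1, by omega⟩
  have : σ = (finRotate (m + 1)) ^ k := by
    ext q
    rw [hσ q, ← finRotate_pow_apply m k q]
  rw [this, map_pow, sign_finRotate, ← pow_mul]

lemma sum_pickR {N : ℕ} (b : Fin N) (g : Fin N → ℂ) :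
    (∑ q : Fin N, g q * (if (q:ℕ) = (b:ℕ) then (1:ℂ) else 0)) = g b := by
  rw [Finset.sum_eq_single b]
  · simp
  · intro q _ hq
    rw [if_neg (fun h => hq (Fin.ext h)), mul_zero]
  · intro h; exact absurd (Finset.mem_univ b) h

lemma sum_pickL {N : ℕ} (b : Fin N) (g : Fin N → ℂ) :
    (∑ q : Fin N, (if (q:ℕ) = (b:ℕ) then (1:ℂ) else 0) * g q) = g b := by
  rw [Finset.sum_eq_single b]
  · simp
  · intro q _ hq
    rw [if_neg (fun h => hq (Fin.ext h)), zero_mul]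
  · intro h; exact absurd (Finset.mem_univ b) h

end aux

/-- The relation (13) between `D_n(z^ℓ f(z))` and `D_n(f(z))`. -/
theorem toeplitz_det_shift_up
    (f : ℝ → ℂ) (hf : IntervalIntegrable f MeasureTheory.volume 0 (2 * Real.pi))
    (n ℓ : ℕ) (hn : 1 ≤ n) (hℓ : 1 ≤ ℓ)
    (hD : ∀ j : ℕ, n ≤ j → j ≤ n + ℓ - 1 → toeplitzDet f j ≠ 0)
    (Φ : ℕ → Polynomial ℂ)
    (hΦ : ∀ j : ℕ, n ≤ j → j ≤ n + ℓ - 1 → IsMonicOPUC f j (Φ j)) :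
    toeplitzDet (fun θ => Complex.exp (Complex.I * ℓ * θ) * f θ) n =
      ((-1 : ℂ) ^ (ℓ * n) / ∏ j ∈ Finset.range (ℓ - 1), ((Nat.factorial (j + 1) : ℂ))) *
        Matrix.det (Matrix.of fun i j : Fin ℓ =>
          ((fun p : Polynomial ℂ => Polynomial.derivative p)^[(i : ℕ)] (Φ (n + (j : ℕ)))).eval 0) *
        toeplitzDet f n := by
  classical
  -- polynomial facts
  have hΦ' : ∀ s : Fin ℓ, IsMonicOPUC f (n + (s:ℕ)) (Φ (n + (s:ℕ))) := by
    intro s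
    exact hΦ (n + s) (by omega) (by have := s.isLt; omega)
  have hΦdeg : ∀ s : Fin ℓ, (Φ (n + (s:ℕ))).natDegree = n + (s:ℕ) := fun s =>
    Polynomial.natDegree_eq_of_degree_eq_some (hΦ' s).2.1
  -- matrices
  let e : (Fin n ⊕ Fin ℓ) ≃ Fin (n + ℓ) := momEquiv n ℓ
  let e' : (Fin n ⊕ Fin ℓ) ≃ Fin (n + ℓ) := finSumFinEquiv
  let T : Matrix (Fin n) (Fin n) ℂ := Matrix.of fun j k : Fin n => fCoeff f ((j : ℤ) - (k : ℤ))
  let A : Matrix (Fin n) (Fin n) ℂ :=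
    Matrix.of fun j k : Fin n => fCoeff f ((j : ℤ) - (k : ℤ) - (ℓ : ℤ))
  let G : Matrix (Fin ℓ) (Fin ℓ) ℂ := Matrix.of fun r s : Fin ℓ => (Φ (n + (s:ℕ))).coeff (r:ℕ)
  let B : Matrix (Fin n) (Fin ℓ) ℂ := Matrix.of fun j r => fCoeff f ((j : ℤ) - ((r:ℕ) : ℤ))
  let J : Matrix (Fin ℓ) (Fin n) ℂ := Matrix.of fun r k => if ((r:ℕ) = (k:ℕ)) then (1:ℂ) else 0
  let Y : Matrix (Fin n) (Fin ℓ) ℂ := Matrix.of fun k s => (Φ (n + (s:ℕ))).coeff (k:ℕ)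
  let W : Matrix (Fin ℓ) (Fin ℓ) ℂ := Matrix.of fun r s => (Φ (n + (s:ℕ))).coeff (n + (r:ℕ))
  let M : Matrix (Fin n ⊕ Fin ℓ) (Fin n ⊕ Fin ℓ) ℂ := Matrix.of fun x z =>
    Sum.elim (fun j : Fin n => fCoeff f ((j : ℤ) - ((e z : ℕ) : ℤ)))
      (fun r : Fin ℓ => if ((e z : ℕ) = (r : ℕ)) then (1:ℂ) else 0) x
  let S : Matrix (Fin n ⊕ Fin ℓ) (Fin n ⊕ Fin ℓ) ℂ := Matrix.of fun z y =>
    Sum.elim (fun k : Fin n => if ((e z : ℕ) = (k : ℕ)) then (1:ℂ) else 0)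
      (fun s : Fin ℓ => (Φ (n + (s:ℕ))).coeff (e z : ℕ)) y
  let S₃ : Matrix (Fin n ⊕ Fin ℓ) (Fin n ⊕ Fin ℓ) ℂ := Matrix.of fun z y =>
    Sum.elim (fun k : Fin n => if ((e' z : ℕ) = (k : ℕ)) then (1:ℂ) else 0)
      (fun s : Fin ℓ => (Φ (n + (s:ℕ))).coeff (e' z : ℕ)) y
  let σp : Equiv.Perm (Fin n ⊕ Fin ℓ) := e.trans e'.symm
  -- step 1 : det M = det A
  have hM : M = Matrix.fromBlocks A B 0 1 := by
    ext x z
    rcases x with j | r <;> rcases z with k | r'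
    · show fCoeff f ((j : ℤ) - (((k:ℕ) + ℓ : ℕ) : ℤ)) = A j k
      show _ = fCoeff f ((j : ℤ) - (k : ℤ) - (ℓ : ℤ))
      congr 1
      push_cast
      ring
    · rfl
    · show (if ((k:ℕ) + ℓ = (r:ℕ)) then (1:ℂ) else 0) = (0 : Matrix (Fin ℓ) (Fin n) ℂ) r k
      rw [if_neg (by omega)]
      rfl
    · show (if ((r':ℕ) = (r:ℕ)) then (1:ℂ) else 0) = (1 : Matrix (Fin ℓ) (Fin ℓ) ℂ) r r'
      rw [Matrix.one_apply]
      by_cases h : r = r'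
      · simp [h]
      · rw [if_neg h, if_neg (fun hh => h (Fin.ext hh.symm))]
  have hMdet : M.det = A.det := by
    rw [hM, Matrix.det_fromBlocks_zero₂₁, Matrix.det_one, mul_one]
  -- step 2 : M * S = fromBlocks T 0 J G
  have hMS : M * S = Matrix.fromBlocks T 0 J G := by
    ext x y
    rw [Matrix.mul_apply]
    rcases x with j | r <;> rcases y with k | s
    · show (∑ z, fCoeff f ((j : ℤ) - ((e z : ℕ) : ℤ)) *
          (if ((e z : ℕ) = (k : ℕ)) then (1:ℂ) else 0)) = T j k
      rw [Equiv.sum_comp e (fun q : Fin (n + ℓ) =>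
        fCoeff f ((j : ℤ) - ((q : ℕ) : ℤ)) * (if ((q : ℕ) = (k : ℕ)) then (1:ℂ) else 0))]
      rw [sum_pickR (⟨(k:ℕ), by omega⟩ : Fin (n + ℓ))
        (fun q : Fin (n + ℓ) => fCoeff f ((j : ℤ) - ((q : ℕ) : ℤ)))]
      rfl
    · show (∑ z, fCoeff f ((j : ℤ) - ((e z : ℕ) : ℤ)) * (Φ (n + (s:ℕ))).coeff (e z : ℕ))
        = (0 : Matrix (Fin n) (Fin ℓ) ℂ) j s
      rw [Equiv.sum_comp e (fun q : Fin (n + ℓ) =>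
        fCoeff f ((j : ℤ) - ((q : ℕ) : ℤ)) * (Φ (n + (s:ℕ))).coeff (q : ℕ))]
      rw [Fin.sum_univ_eq_sum_range
        (fun p : ℕ => fCoeff f ((j : ℤ) - (p : ℤ)) * (Φ (n + (s:ℕ))).coeff p) (n + ℓ)]
      rw [← Finset.sum_subset (Finset.range_subset_range.mpr (by have := s.isLt; omega :
          n + (s:ℕ) + 1 ≤ n + ℓ))]
      · show (∑ p ∈ Finset.range (n + (s:ℕ) + 1),
            fCoeff f ((j : ℤ) - (p : ℤ)) * (Φ (n + (s:ℕ))).coeff p) = _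
        rw [orth_sum f hf (hΦ' s) (by have := j.isLt; omega : (j:ℕ) < n + (s:ℕ))]
        rfl
      · intro p _ hp
        rw [Polynomial.coeff_eq_zero_of_natDegree_lt, mul_zero]
        rw [hΦdeg s]
        simp only [Finset.mem_range, not_lt] at hp
        omega
    · show (∑ z, (if ((e z : ℕ) = (r : ℕ)) then (1:ℂ) else 0) *
          (if ((e z : ℕ) = (k : ℕ)) then (1:ℂ) else 0)) = J r k
      rw [Equiv.sum_comp e (fun q : Fin (n + ℓ) =>
        (if ((q : ℕ) = (r : ℕ)) then (1:ℂ) else 0) * (if ((q : ℕ) = (k : ℕ)) then (1:ℂ) else 0))]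
      rw [sum_pickL (⟨(r:ℕ), by omega⟩ : Fin (n + ℓ))
        (fun q : Fin (n + ℓ) => (if ((q : ℕ) = (k : ℕ)) then (1:ℂ) else 0))]
      rfl
    · show (∑ z, (if ((e z : ℕ) = (r : ℕ)) then (1:ℂ) else 0) *
          (Φ (n + (s:ℕ))).coeff (e z : ℕ)) = G r s
      rw [Equiv.sum_comp e (fun q : Fin (n + ℓ) =>
        (if ((q : ℕ) = (r : ℕ)) then (1:ℂ) else 0) * (Φ (n + (s:ℕ))).coeff (q : ℕ))]
      rw [sum_pickL (⟨(r:ℕ), by omega⟩ : Fin (n + ℓ))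
        (fun q : Fin (n + ℓ) => (Φ (n + (s:ℕ))).coeff (q : ℕ))]
      rfl
  -- step 3 : det S
  have hS : S = S₃.submatrix σp id := by
    ext z y
    show S z y = S₃ (σp z) y
    have : e' (σp z) = e z := by
      simp [σp, e']
    rcases y with k | s
    · show (if ((e z : ℕ) = (k : ℕ)) then (1:ℂ) else 0)
        = (if ((e' (σp z) : ℕ) = (k : ℕ)) then (1:ℂ) else 0)
      rw [this]
    · show (Φ (n + (s:ℕ))).coeff (e z : ℕ) = (Φ (n + (s:ℕ))).coeff (e' (σp z) : ℕ)
      rw [this]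
  have hS₃ : S₃ = Matrix.fromBlocks 1 Y 0 W := by
    ext z y
    rcases z with k' | r <;> rcases y with k | s
    · show (if ((e' (Sum.inl k') : ℕ) = (k : ℕ)) then (1:ℂ) else 0)
        = (1 : Matrix (Fin n) (Fin n) ℂ) k' k
      have : ((e' (Sum.inl k') : Fin (n+ℓ)) : ℕ) = (k' : ℕ) := by simp [e']
      rw [this, Matrix.one_apply]
      by_cases h : k' = k
      · simp [h]
      · rw [if_neg (fun hh => h (Fin.ext hh)), if_neg h]
    · show (Φ (n + (s:ℕ))).coeff (e' (Sum.inl k') : ℕ) = Y k' s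
      have : ((e' (Sum.inl k') : Fin (n+ℓ)) : ℕ) = (k' : ℕ) := by simp [e']
      rw [this]
      rfl
    · show (if ((e' (Sum.inr r) : ℕ) = (k : ℕ)) then (1:ℂ) else 0)
        = (0 : Matrix (Fin ℓ) (Fin n) ℂ) r k
      have : ((e' (Sum.inr r) : Fin (n+ℓ)) : ℕ) = n + (r : ℕ) := by simp [e']
      rw [this, if_neg (by have := k.isLt; omega)]
      rfl
    · show (Φ (n + (s:ℕ))).coeff (e' (Sum.inr r) : ℕ) = W r s
      have : ((e' (Sum.inr r) : Fin (n+ℓ)) : ℕ) = n + (r : ℕ) := by simp [e']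
      rw [this]
      rfl
  have hWdet : W.det = 1 := by
    have hup : W.BlockTriangular id := by
      intro i j hij
      show (Φ (n + (j:ℕ))).coeff (n + (i:ℕ)) = 0
      apply Polynomial.coeff_eq_zero_of_natDegree_lt
      rw [hΦdeg j]
      have : (j : ℕ) < (i : ℕ) := hij
      omega
    rw [Matrix.det_of_upperTriangular hup]
    apply Finset.prod_eq_one
    intro r _
    show (Φ (n + (r:ℕ))).coeff (n + (r:ℕ)) = 1
    have h1 := (hΦ' r).1.coeff_natDegree
    rw [hΦdeg r] at h1
    exact h1
  have hsign : Equiv.Perm.sign σp = (-1 : ℤˣ) ^ ((n + ℓ - 1) * ℓ) := by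
    rw [← Equiv.Perm.sign_permCongr e' σp]
    apply sign_rotation (by omega)
    intro q
    have h0 : (e'.permCongr σp) q = e (e'.symm q) := by
      simp [σp, Equiv.permCongr_apply]
    by_cases hq : (q : ℕ) < n
    · have h1 : e'.symm q = Sum.inl ⟨(q:ℕ), hq⟩ := by
        rw [Equiv.symm_apply_eq]
        apply Fin.ext
        simp [e']
      rw [h0, h1]
      show (q:ℕ) + ℓ = ((q:ℕ) + ℓ) % (n + ℓ)
      rw [Nat.mod_eq_of_lt (by omega)]
    · have h1 : e'.symm q = Sum.inr ⟨(q:ℕ) - n, by have := q.isLt; omega⟩ := by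
        rw [Equiv.symm_apply_eq]
        apply Fin.ext
        simp [e']
        omega
      rw [h0, h1]
      show (q:ℕ) - n = ((q:ℕ) + ℓ) % (n + ℓ)
      rw [show (q:ℕ) + ℓ = ((q:ℕ) - n) + (n + ℓ) by omega, Nat.add_mod_right,
        Nat.mod_eq_of_lt (by have := q.isLt; omega)]
  have hSdet : S.det = ((-1 : ℂ)) ^ (ℓ * n) := by
    rw [hS, Matrix.det_permute, hS₃, Matrix.det_fromBlocks_zero₂₁, Matrix.det_one, one_mul,
      hWdet, mul_one, hsign]
    have hcast : (((((-1 : ℤˣ) ^ ((n + ℓ - 1) * ℓ)) : ℤˣ) : ℤ) : ℂ) = (-1 : ℂ) ^ ((n + ℓ - 1) * ℓ) := by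
      push_cast
      rfl
    rw [hcast]
    obtain ⟨m, rfl⟩ : ∃ m, ℓ = m + 1 := ⟨ℓ - 1, by omega⟩
    rw [show (n + (m+1) - 1) * (m+1) = (m+1) * n + m * (m+1) by
      rw [show n + (m+1) - 1 = n + m by omega]; ring]
    rw [pow_add, (Nat.even_mul_succ_self m).neg_one_pow, mul_one]
  -- assemble
  have key : A.det * S.det = T.det * G.det := by
    rw [← hMdet, ← Matrix.det_mul M S, hMS, Matrix.det_fromBlocks_zero₁₂]
  have hinv : ((-1 : ℂ) ^ (ℓ * n)) * ((-1 : ℂ) ^ (ℓ * n)) = 1 := by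
    rw [← pow_add]
    exact Even.neg_one_pow ⟨ℓ * n, by ring⟩
  have hA : A.det = (-1 : ℂ) ^ (ℓ * n) * T.det * G.det := by
    calc A.det = A.det * (((-1 : ℂ) ^ (ℓ * n)) * ((-1 : ℂ) ^ (ℓ * n))) := by rw [hinv, mul_one]
      _ = (A.det * ((-1 : ℂ) ^ (ℓ * n))) * ((-1 : ℂ) ^ (ℓ * n)) := by ring
      _ = (T.det * G.det) * ((-1 : ℂ) ^ (ℓ * n)) := by rw [← hSdet, key]
      _ = (-1 : ℂ) ^ (ℓ * n) * T.det * G.det := by ring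
  -- LHS
  have hL : toeplitzDet (fun θ => Complex.exp (Complex.I * ℓ * θ) * f θ) n = A.det := by
    unfold toeplitzDet
    congr 1
    ext j k
    exact fCoeff_shift f ℓ _
  -- RHS determinant
  have hR : Matrix.det (Matrix.of fun i j : Fin ℓ =>
        ((fun p : Polynomial ℂ => Polynomial.derivative p)^[(i : ℕ)] (Φ (n + (j : ℕ)))).eval 0)
      = (∏ i : Fin ℓ, ((Nat.factorial (i : ℕ) : ℂ))) * G.det := by
    rw [show (Matrix.of fun i j : Fin ℓ =>
        ((fun p : Polynomial ℂ => Polynomial.derivative p)^[(i : ℕ)] (Φ (n + (j : ℕ)))).eval 0)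
        = Matrix.of (fun i j : Fin ℓ => ((Nat.factorial (i : ℕ) : ℂ)) * G i j) from ?_]
    · exact Matrix.det_mul_column _ _
    · ext i j
      show ((⇑Polynomial.derivative)^[(i : ℕ)] (Φ (n + (j : ℕ)))).eval 0 = _
      rw [← Polynomial.coeff_zero_eq_eval_zero, Polynomial.coeff_iterate_derivative]
      simp only [zero_add, Nat.descFactorial_self]
      rw [nsmul_eq_mul]
      rfl
  have hprod : (∏ i : Fin ℓ, ((Nat.factorial (i : ℕ) : ℂ)))
      = ∏ j ∈ Finset.range (ℓ - 1), ((Nat.factorial (j + 1) : ℂ)) := by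
    obtain ⟨m, rfl⟩ : ∃ m, ℓ = m + 1 := ⟨ℓ - 1, by omega⟩
    rw [Fin.prod_univ_eq_prod_range (fun i => ((Nat.factorial i : ℂ))) (m + 1),
      Finset.prod_range_succ']
    simp
  have hPne : (∏ j ∈ Finset.range (ℓ - 1), ((Nat.factorial (j + 1) : ℂ))) ≠ 0 := by
    apply Finset.prod_ne_zero_iff.mpr
    intro j _
    exact_mod_cast Nat.cast_ne_zero.mpr (Nat.factorial_ne_zero (j + 1))
  have hT : toeplitzDet f n = T.det := rfl
  rw [hL, hA, hR, hprod, hT]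
  field_simp
end
end

section
/- Let f be a Fisher–Hartwig symbol with Re α_j > −1/2 and Re β_j ∈ (−1/2, 1/2] for all j, fix 0 ≤ j_0 ≤ m, and let f^+ (resp. f^−) be the Fisher–Hartwig symbol obtained from f by replacing β_{j_0} with β_{j_0} + 1 (resp. β_{j_0} − 1). If D_n(f) ≠ 0, so that the monic orthogonal polynomials Φ_n and Φ̂_n for the weight f exist, then D_n(f^+) = z_{j_0}^{−n} Φ_n(0) D_n(f) and D_n(f^−) = z_{j_0}^{n} Φ̂_n(0) D_n(f). -/
open Complex Real Filter Finset

noncomputable section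

/-- Barnes' G-function: `barnesG1 z = G(1+z)`. -/
def barnesG1 (z : ℂ) : ℂ :=
  (2 * (Real.pi : ℂ)) ^ (z / 2) *
    Complex.exp (-(z + (1 + (Real.eulerMascheroniConstant : ℂ)) * z ^ 2) / 2) *
    ∏' k : ℕ, (1 + z / ((k : ℂ) + 1)) ^ (k + 1) *
      Complex.exp (z ^ 2 / (2 * ((k : ℂ) + 1)) - z)

/-- The jump factor `g_{z_j,β_j}`, as a function of the angle. -/
def fhJump (t : ℝ) (b : ℂ) (θ : ℝ) : ℂ :=
  if θ < t then Complex.exp (Real.pi * Complex.I * b)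
  else Complex.exp (-(Real.pi * Complex.I * b))

/-- The Fisher–Hartwig symbol, as a function of the angle `θ ∈ [0,2π)`. -/
def fhSymbol (m : ℕ) (θs : Fin (m+1) → ℝ) (α β : Fin (m+1) → ℂ) (Vc : ℂ → ℂ) : ℝ → ℂ :=
  fun θ =>
    Complex.exp (Vc (Complex.exp (Complex.I * θ))) *
    Complex.exp (Complex.I * θ * ∑ j, β j) *
    ∏ j, (((‖Complex.exp (Complex.I * θ) - Complex.exp (Complex.I * θs j)‖ : ℝ) : ℂ) ^ (2 * α j) *
      fhJump (θs j) (β j) θ * Complex.exp (-(Complex.I * (θs j : ℂ) * β j)))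

/-- Fourier coefficients `V_k` of `V`. -/
def vCoeff (Vc : ℂ → ℂ) (k : ℤ) : ℂ :=
  fCoeff (fun θ => Vc (Complex.exp (Complex.I * θ))) k

/-- `log b_+(z) = Σ_{k≥1} V_k z^k`. -/
def bplusLog (Vc : ℂ → ℂ) (z : ℂ) : ℂ := ∑' k : ℕ, vCoeff Vc ((k : ℤ) + 1) * z ^ (k + 1)

/-- `log b_-(z) = Σ_{k≤-1} V_k z^k`. -/
def bminusLog (Vc : ℂ → ℂ) (z : ℂ) : ℂ :=
  ∑' k : ℕ, vCoeff Vc (-((k : ℤ) + 1)) * z ^ (-((k : ℤ) + 1))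

/-- The strong Szegő main term `exp(n V_0 + Σ_{k≥1} k V_k V_{-k})`. -/
def szegoMain (Vc : ℂ → ℂ) (n : ℕ) : ℂ :=
  Complex.exp ((n : ℂ) * vCoeff Vc 0 +
    ∑' k : ℕ, ((k : ℂ) + 1) * vCoeff Vc ((k : ℤ) + 1) * vCoeff Vc (-((k : ℤ) + 1)))

/-- The main term in the Fisher–Hartwig asymptotics of `D_n(f)`, with jump
parameters `b` (in place of `β`). -/
def fhMain (m : ℕ) (θs : Fin (m+1) → ℝ) (α b : Fin (m+1) → ℂ) (Vc : ℂ → ℂ) (n : ℕ) : ℂ :=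
  szegoMain Vc n *
  (∏ j, Complex.exp ((-(α j) + b j) * bplusLog Vc (Complex.exp (Complex.I * θs j)) +
      (-(α j) - b j) * bminusLog Vc (Complex.exp (Complex.I * θs j)))) *
  (n : ℂ) ^ (∑ j, (α j ^ 2 - b j ^ 2)) *
  (∏ j, ∏ k ∈ Finset.Ioi j,
    (((‖Complex.exp (Complex.I * θs j) - Complex.exp (Complex.I * θs k)‖ : ℝ) : ℂ) ^
        (2 * (b j * b k - α j * α k)) *
      Complex.exp (Complex.I * ((θs k : ℂ) - (θs j : ℂ) - (Real.pi : ℂ)) * (α j * b k - α k * b j)))) *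
  ∏ j, barnesG1 (α j + b j) * barnesG1 (α j - b j) / barnesG1 (2 * α j)

section Aux
lemma key_det (n : ℕ) (φ : ℤ → ℂ) (c : ℕ → ℂ) (hcn : c n = 1)
    (hrel : ∀ j : Fin n, ∑ l ∈ Finset.range (n+1), c l * φ ((j : ℤ) - l) = 0) :
    Matrix.det (Matrix.of fun j k : Fin n => φ ((j:ℤ) - (k:ℤ) - 1)) =
      (-1)^n * c 0 * Matrix.det (Matrix.of fun j k : Fin n => φ ((j:ℤ) - (k:ℤ))) := by
  cases n with
  | zero => simp [Matrix.det_fin_zero, hcn]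
  | succ m =>
    set D : Matrix (Fin (m+1)) (Fin (m+1)) ℂ :=
      Matrix.of fun j k : Fin (m+1) => φ ((j:ℤ) - (k:ℤ)) with hD
    set ρ : Equiv.Perm (Fin (m+1)) := finRotate (m+1) with hρ
    set A : Matrix (Fin (m+1)) (Fin (m+1)) ℂ := D.submatrix id ρ with hA
    have hM : (Matrix.of fun j k : Fin (m+1) => φ ((j:ℤ) - (k:ℤ) - 1)) =
        A.updateCol (Fin.last m) (fun k => ∑ i, (-(c (ρ i : Fin (m+1)).val)) • A k i) := by
      ext j k
      by_cases hk : k = Fin.last m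
      · subst hk
        rw [Matrix.updateCol_self]
        have hsum : ∑ i, (-(c (ρ i : Fin (m+1)).val)) • A j i
            = ∑ i : Fin (m+1), -(c i.val * φ ((j:ℤ) - i.val)) := by
          rw [← Equiv.sum_comp ρ.symm (fun i => (-(c (ρ i : Fin (m+1)).val)) • A j i)]
          apply Finset.sum_congr rfl
          intro i _
          simp only [hA, hD, Matrix.submatrix_apply, Matrix.of_apply, id_eq,
            Equiv.apply_symm_apply, smul_eq_mul]
          ring
        rw [hsum]
        have h2 : ∑ i : Fin (m+1), -(c i.val * φ ((j:ℤ) - i.val))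
            = -∑ l ∈ Finset.range (m+1), c l * φ ((j:ℤ) - l) := by
          rw [← Finset.sum_neg_distrib]
          rw [Finset.sum_range fun l => -(c l * φ ((j:ℤ) - l))]
        have h3 := hrel j
        rw [Finset.sum_range_succ] at h3
        rw [hcn] at h3
        have : φ ((j:ℤ) - (m+1)) = -∑ l ∈ Finset.range (m+1), c l * φ ((j:ℤ) - l) := by
          push_cast at h3 ⊢
          linear_combination h3
        rw [h2, ← this]
        show φ ((j:ℤ) - (Fin.last m : ℕ) - 1) = _
        congr 1
        simp [Fin.last]
        push_cast
        ring
      · rw [Matrix.updateCol_ne hk]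
        simp only [hA, hD, Matrix.submatrix_apply, Matrix.of_apply, id_eq, hρ,
          finRotate_succ_apply]
        congr 1
        have : ((k + 1 : Fin (m+1)) : ℕ) = (k : ℕ) + 1 := by
          rw [Fin.val_add_one]
          simp [hk]
        rw [this]
        push_cast
        ring
    rw [hM, Matrix.det_updateCol_sum A (Fin.last m) (fun i => -(c (ρ i : Fin (m+1)).val))]
    have hρlast : ρ (Fin.last m) = 0 := by
      simp [hρ, finRotate_succ_apply]
    rw [hρlast]
    have hsign : A.det = ((-1:ℂ))^m * D.det := by
      rw [hA, Matrix.det_permute' ρ D, hρ, sign_finRotate]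
      push_cast
      ring
    rw [smul_eq_mul, hsign]
    simp only [Fin.val_zero]
    ring

lemma exp_neg_pi_mul_I' : Complex.exp (-(↑Real.pi * Complex.I)) = -1 := by
  rw [Complex.exp_neg, Complex.exp_pi_mul_I]; norm_num

lemma fhJump_add_one (t : ℝ) (b : ℂ) (θ : ℝ) : fhJump t (b + 1) θ = -fhJump t b θ := by
  unfold fhJump
  split_ifs
  · rw [mul_add, Complex.exp_add, mul_one, Complex.exp_pi_mul_I]; ring
  · rw [show -(↑Real.pi * Complex.I * (b + 1)) = -(↑Real.pi * Complex.I * b) + -(↑Real.pi * Complex.I) from by ring,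
      Complex.exp_add, exp_neg_pi_mul_I']
    ring

lemma fhJump_sub_one (t : ℝ) (b : ℂ) (θ : ℝ) : fhJump t (b - 1) θ = -fhJump t b θ := by
  unfold fhJump
  split_ifs
  · rw [show (↑Real.pi * Complex.I * (b - 1)) = (↑Real.pi * Complex.I * b) + -(↑Real.pi * Complex.I) from by ring,
      Complex.exp_add, exp_neg_pi_mul_I']
    ring
  · rw [show -(↑Real.pi * Complex.I * (b - 1)) = -(↑Real.pi * Complex.I * b) + (↑Real.pi * Complex.I) from by ring,
      Complex.exp_add, Complex.exp_pi_mul_I]; ring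

lemma fhSymbol_update (m : ℕ) (θs : Fin (m+1) → ℝ) (α β : Fin (m+1) → ℂ) (Vc : ℂ → ℂ)
    (j₀ : Fin (m+1)) (s : ℂ) (hs : s = 1 ∨ s = -1) (θ : ℝ) :
    fhSymbol m θs α (Function.update β j₀ (β j₀ + s)) Vc θ =
      (-Complex.exp (-(Complex.I * (θs j₀ : ℂ) * s))) *
        (Complex.exp (Complex.I * (θ : ℂ) * s) * fhSymbol m θs α β Vc θ) := by
  set u := Function.update β j₀ (β j₀ + s) with hu
  have hsum : ∑ j, u j = (∑ j, β j) + s := by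
    rw [hu, Finset.sum_update_of_mem (Finset.mem_univ j₀),
      Finset.sum_eq_sum_sdiff_singleton_add (Finset.mem_univ j₀) β]
    ring
  set G : Fin (m+1) → ℂ → ℂ := fun j b =>
    (((‖Complex.exp (Complex.I * θ) - Complex.exp (Complex.I * θs j)‖ : ℝ) : ℂ) ^ (2 * α j) *
      fhJump (θs j) b θ * Complex.exp (-(Complex.I * (θs j : ℂ) * b))) with hG
  have hGj₀ : G j₀ (β j₀ + s) = (-Complex.exp (-(Complex.I * (θs j₀ : ℂ) * s))) * G j₀ (β j₀) := by
    rw [hG]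
    have hj : fhJump (θs j₀) (β j₀ + s) θ = -fhJump (θs j₀) (β j₀) θ := by
      rcases hs with h | h <;> subst h
      · exact fhJump_add_one _ _ _
      · rw [show β j₀ + -1 = β j₀ - 1 from by ring]; exact fhJump_sub_one _ _ _
    have he : Complex.exp (-(Complex.I * (θs j₀ : ℂ) * (β j₀ + s)))
        = Complex.exp (-(Complex.I * (θs j₀ : ℂ) * β j₀)) * Complex.exp (-(Complex.I * (θs j₀ : ℂ) * s)) := by
      rw [← Complex.exp_add]; ring_nf
    simp only [hj, he]; ring
  have hprod : (∏ j, G j (u j)) =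
      (-Complex.exp (-(Complex.I * (θs j₀ : ℂ) * s))) * ∏ j, G j (β j) := by
    rw [← Finset.mul_prod_erase Finset.univ (fun j => G j (u j)) (Finset.mem_univ j₀),
      ← Finset.mul_prod_erase Finset.univ (fun j => G j (β j)) (Finset.mem_univ j₀)]
    have : ∀ j ∈ Finset.univ.erase j₀, G j (u j) = G j (β j) := by
      intro j hj
      rw [hu, Function.update_of_ne (Finset.ne_of_mem_erase hj)]
    rw [Finset.prod_congr rfl this, hu, Function.update_self, hGj₀]
    ring
  show _ * Complex.exp (Complex.I * θ * ∑ j, u j) * (∏ j, G j (u j)) = _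
  rw [hsum, hprod, show Complex.exp (Complex.I * θ * ((∑ j, β j) + s))
      = Complex.exp (Complex.I * θ * ∑ j, β j) * Complex.exp (Complex.I * θ * s) from by
    rw [← Complex.exp_add]; ring_nf]
  show _ = _ * (_ * (_ * Complex.exp (Complex.I * θ * ∑ j, β j) * ∏ j, G j (β j)))
  ring

lemma fCoeff_shift_plus (c : ℂ) (h : ℝ → ℂ) (k : ℤ) :
    fCoeff (fun θ => c * (Complex.exp (Complex.I * θ) * h θ)) k = c * fCoeff h (k - 1) := by
  unfold fCoeff
  rw [show (∫ θ in (0:ℝ)..(2 * Real.pi),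
      (c * (Complex.exp (Complex.I * θ) * h θ)) * Complex.exp (-Complex.I * k * θ))
      = ∫ θ in (0:ℝ)..(2 * Real.pi),
      c * (h θ * Complex.exp (-Complex.I * ((k - 1 : ℤ) : ℂ) * θ)) from ?_]
  · rw [intervalIntegral.integral_const_mul]; ring
  · congr 1; funext θ
    have he : Complex.exp (Complex.I * θ) * Complex.exp (-Complex.I * k * θ)
        = Complex.exp (-Complex.I * ((k - 1 : ℤ) : ℂ) * θ) := by
      rw [← Complex.exp_add]; congr 1; push_cast; ring
    rw [← he]; ring

lemma fCoeff_shift_minus (c : ℂ) (h : ℝ → ℂ) (k : ℤ) :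
    fCoeff (fun θ => c * (Complex.exp (-(Complex.I * θ)) * h θ)) k = c * fCoeff h (k + 1) := by
  unfold fCoeff
  rw [show (∫ θ in (0:ℝ)..(2 * Real.pi),
      (c * (Complex.exp (-(Complex.I * θ)) * h θ)) * Complex.exp (-Complex.I * k * θ))
      = ∫ θ in (0:ℝ)..(2 * Real.pi),
      c * (h θ * Complex.exp (-Complex.I * ((k + 1 : ℤ) : ℂ) * θ)) from ?_]
  · rw [intervalIntegral.integral_const_mul]; ring
  · congr 1; funext θ
    have he : Complex.exp (-(Complex.I * θ)) * Complex.exp (-Complex.I * k * θ)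
        = Complex.exp (-Complex.I * ((k + 1 : ℤ) : ℂ) * θ) := by
      rw [← Complex.exp_add]; congr 1; push_cast; ring
    rw [← he]; ring


lemma fCoeff_eq_zero_of_not_integrable {f : ℝ → ℂ}
    (hi : ¬ IntervalIntegrable f MeasureTheory.volume 0 (2 * Real.pi)) (k : ℤ) :
    fCoeff f k = 0 := by
  unfold fCoeff
  have hni : ¬ IntervalIntegrable (fun θ : ℝ => f θ * Complex.exp (-Complex.I * k * θ))
      MeasureTheory.volume 0 (2 * Real.pi) := by
    intro h
    apply hi
    have hc : Continuous fun θ : ℝ => Complex.exp (Complex.I * k * θ) :=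
      Complex.continuous_exp.comp (continuous_const.mul Complex.continuous_ofReal)
    have h2 := h.mul_continuousOn hc.continuousOn
    have : (fun θ : ℝ => (f θ * Complex.exp (-Complex.I * k * θ)) * Complex.exp (Complex.I * k * θ)) = f := by
      funext θ
      rw [mul_assoc, ← Complex.exp_add]
      simp [show -Complex.I * k * θ + Complex.I * k * θ = 0 from by ring]
    rwa [this] at h2
  rw [intervalIntegral.integral_undef hni, mul_zero]

lemma rel_of_opuc {f : ℝ → ℂ} {n : ℕ} {P : Polynomial ℂ}
    (hP : IsMonicOPUC f n P) (j : Fin n) :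
    ∑ l ∈ Finset.range (n+1), P.coeff l * fCoeff f ((j : ℤ) - l) = 0 := by
  by_cases hi : IntervalIntegrable f MeasureTheory.volume 0 (2 * Real.pi)
  · have hdeg : P.natDegree = n := Polynomial.natDegree_eq_of_degree_eq_some hP.2.1
    have horth := hP.2.2 j j.isLt
    have hint : ∀ l : ℕ, IntervalIntegrable
        (fun θ : ℝ => P.coeff l * (f θ * Complex.exp (-Complex.I * (((j : ℤ) - l : ℤ) : ℂ) * θ)))
        MeasureTheory.volume 0 (2 * Real.pi) := by
      intro l
      have hc : Continuous fun θ : ℝ => Complex.exp (-Complex.I * (((j : ℤ) - l : ℤ) : ℂ) * θ) :=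
        Complex.continuous_exp.comp ((continuous_const.mul Complex.continuous_ofReal))
      exact (hi.mul_continuousOn hc.continuousOn).const_mul _
    have h1 : ∀ l ∈ Finset.range (n+1), P.coeff l * fCoeff f ((j : ℤ) - l)
        = (1 / (2 * (Real.pi : ℂ))) * ∫ θ in (0:ℝ)..(2 * Real.pi),
            P.coeff l * (f θ * Complex.exp (-Complex.I * (((j : ℤ) - l : ℤ) : ℂ) * θ)) := by
      intro l _
      unfold fCoeff
      rw [intervalIntegral.integral_const_mul]
      ring
    rw [Finset.sum_congr rfl h1, ← Finset.mul_sum,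
      ← intervalIntegral.integral_finset_sum (fun l _ => hint l)]
    have h2 : (fun θ : ℝ => ∑ l ∈ Finset.range (n+1),
        P.coeff l * (f θ * Complex.exp (-Complex.I * (((j : ℤ) - l : ℤ) : ℂ) * θ)))
        = fun θ : ℝ => P.eval (Complex.exp (Complex.I * θ)) * Complex.exp (-Complex.I * (j : ℕ) * θ) * f θ := by
      funext θ
      rw [Polynomial.eval_eq_sum_range' (show P.natDegree < n + 1 from hdeg ▸ Nat.lt_succ_self n),
        Finset.sum_mul, Finset.sum_mul]
      apply Finset.sum_congr rfl
      intro l _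
      have he : Complex.exp (-Complex.I * (((j : ℤ) - l : ℤ) : ℂ) * θ)
          = Complex.exp (Complex.I * θ) ^ l * Complex.exp (-Complex.I * (j : ℕ) * θ) := by
        rw [← Complex.exp_nat_mul, ← Complex.exp_add]
        congr 1
        push_cast
        ring
      rw [he]
      ring
    rw [h2, horth]
  · apply Finset.sum_eq_zero
    intro l _
    rw [fCoeff_eq_zero_of_not_integrable hi, mul_zero]

lemma rel_of_opuc_rev {f : ℝ → ℂ} {n : ℕ} {P : Polynomial ℂ}
    (hP : IsMonicOPUCRev f n P) (j : Fin n) :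
    ∑ l ∈ Finset.range (n+1), P.coeff l * fCoeff f ((l : ℤ) - (j : ℤ)) = 0 := by
  by_cases hi : IntervalIntegrable f MeasureTheory.volume 0 (2 * Real.pi)
  · have hdeg : P.natDegree = n := Polynomial.natDegree_eq_of_degree_eq_some hP.2.1
    have horth := hP.2.2 j j.isLt
    have hint : ∀ l : ℕ, IntervalIntegrable
        (fun θ : ℝ => P.coeff l * (f θ * Complex.exp (-Complex.I * (((l : ℤ) - (j : ℤ) : ℤ) : ℂ) * θ)))
        MeasureTheory.volume 0 (2 * Real.pi) := by
      intro l
      have hc : Continuous fun θ : ℝ => Complex.exp (-Complex.I * (((l : ℤ) - (j : ℤ) : ℤ) : ℂ) * θ) :=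
        Complex.continuous_exp.comp ((continuous_const.mul Complex.continuous_ofReal))
      exact (hi.mul_continuousOn hc.continuousOn).const_mul _
    have h1 : ∀ l ∈ Finset.range (n+1), P.coeff l * fCoeff f ((l : ℤ) - (j : ℤ))
        = (1 / (2 * (Real.pi : ℂ))) * ∫ θ in (0:ℝ)..(2 * Real.pi),
            P.coeff l * (f θ * Complex.exp (-Complex.I * (((l : ℤ) - (j : ℤ) : ℤ) : ℂ) * θ)) := by
      intro l _
      unfold fCoeff
      rw [intervalIntegral.integral_const_mul]
      ring
    rw [Finset.sum_congr rfl h1, ← Finset.mul_sum,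
      ← intervalIntegral.integral_finset_sum (fun l _ => hint l)]
    have h2 : (fun θ : ℝ => ∑ l ∈ Finset.range (n+1),
        P.coeff l * (f θ * Complex.exp (-Complex.I * (((l : ℤ) - (j : ℤ) : ℤ) : ℂ) * θ)))
        = fun θ : ℝ => P.eval (Complex.exp (-Complex.I * θ)) * Complex.exp (Complex.I * (j : ℕ) * θ) * f θ := by
      funext θ
      rw [Polynomial.eval_eq_sum_range' (show P.natDegree < n + 1 from hdeg ▸ Nat.lt_succ_self n),
        Finset.sum_mul, Finset.sum_mul]
      apply Finset.sum_congr rfl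
      intro l _
      have he : Complex.exp (-Complex.I * (((l : ℤ) - (j : ℤ) : ℤ) : ℂ) * θ)
          = Complex.exp (-Complex.I * θ) ^ l * Complex.exp (Complex.I * (j : ℕ) * θ) := by
        rw [← Complex.exp_nat_mul, ← Complex.exp_add]
        congr 1
        push_cast
        ring
      rw [he]
      ring
    rw [h2, horth]
  · apply Finset.sum_eq_zero
    intro l _
    rw [fCoeff_eq_zero_of_not_integrable hi, mul_zero]

end Aux

/-- Exact identities for the Toeplitz determinants of the symbols `f^±` obtained
from a Fisher–Hartwig symbol `f` by shifting one jump parameter `β_{j₀}` by `±1`. -/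
theorem toeplitz_det_beta_shift
    (m : ℕ) (θs : Fin (m+1) → ℝ) (α β : Fin (m+1) → ℂ) (Vc : ℂ → ℂ)
    (hθ0 : θs 0 = 0) (hθmono : StrictMono θs) (hθlt : ∀ j, θs j < 2 * Real.pi)
    (hV : ∀ z : ℂ, ‖z‖ = 1 → AnalyticAt ℂ Vc z)
    (hα : ∀ j, -(1/2 : ℝ) < (α j).re)
    (hβ : ∀ j, -(1/2 : ℝ) < (β j).re ∧ (β j).re ≤ 1/2)
    (j₀ : Fin (m+1)) (n : ℕ)
    (hD : toeplitzDet (fhSymbol m θs α β Vc) n ≠ 0)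
    (Φ Φhat : Polynomial ℂ)
    (hΦ : IsMonicOPUC (fhSymbol m θs α β Vc) n Φ)
    (hΦhat : IsMonicOPUCRev (fhSymbol m θs α β Vc) n Φhat) :
    toeplitzDet (fhSymbol m θs α (Function.update β j₀ (β j₀ + 1)) Vc) n =
        (Complex.exp (Complex.I * θs j₀))⁻¹ ^ n * Φ.eval 0 *
          toeplitzDet (fhSymbol m θs α β Vc) n ∧
      toeplitzDet (fhSymbol m θs α (Function.update β j₀ (β j₀ - 1)) Vc) n =
        Complex.exp (Complex.I * θs j₀) ^ n * Φhat.eval 0 *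
          toeplitzDet (fhSymbol m θs α β Vc) n := by
  have hdegP : Φ.natDegree = n := Polynomial.natDegree_eq_of_degree_eq_some hΦ.2.1
  have hdegQ : Φhat.natDegree = n := Polynomial.natDegree_eq_of_degree_eq_some hΦhat.2.1
  have hcnP : Φ.coeff n = 1 := by rw [← hdegP]; exact hΦ.1.coeff_natDegree
  have hcnQ : Φhat.coeff n = 1 := by rw [← hdegQ]; exact hΦhat.1.coeff_natDegree
  set f : ℝ → ℂ := fhSymbol m θs α β Vc with hf
  have hpow : ∀ w : ℂ, (-w)^n * ((-1:ℂ))^n = w^n := by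
    intro w
    rw [← mul_pow]
    norm_num
  constructor
  · -- plus shift
    have hfp : fhSymbol m θs α (Function.update β j₀ (β j₀ + 1)) Vc
        = fun θ : ℝ => (-Complex.exp (-(Complex.I * ((θs j₀ : ℝ) : ℂ)))) *
            (Complex.exp (Complex.I * (θ : ℂ)) * f θ) := by
      funext θ
      rw [fhSymbol_update m θs α β Vc j₀ 1 (Or.inl rfl) θ, mul_one, mul_one]
    unfold toeplitzDet
    have hM : (Matrix.of fun j k : Fin n =>
        fCoeff (fhSymbol m θs α (Function.update β j₀ (β j₀ + 1)) Vc) ((j:ℤ) - (k:ℤ)))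
        = (-Complex.exp (-(Complex.I * ((θs j₀ : ℝ) : ℂ)))) •
          (Matrix.of fun j k : Fin n => fCoeff f ((j:ℤ) - (k:ℤ) - 1)) := by
      ext j k
      simp only [Matrix.smul_apply, Matrix.of_apply, smul_eq_mul]
      rw [hfp, fCoeff_shift_plus]
    rw [hM, Matrix.det_smul,
      key_det n (fun kk => fCoeff f kk) (fun l => Φ.coeff l) hcnP (fun j => rel_of_opuc hΦ j),
      ← Polynomial.coeff_zero_eq_eval_zero, Fintype.card_fin]
    have h1 : ((Complex.exp (Complex.I * ((θs j₀ : ℝ) : ℂ)))⁻¹)^n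
        = (Complex.exp (-(Complex.I * ((θs j₀ : ℝ) : ℂ))))^n := by
      rw [← Complex.exp_neg]
    rw [h1]
    have h2 := hpow (Complex.exp (-(Complex.I * ((θs j₀ : ℝ) : ℂ))))
    set Dn := Matrix.det (Matrix.of fun j k : Fin n => fCoeff f ((j:ℤ) - (k:ℤ)))
    linear_combination (Φ.coeff 0 * Dn) * h2
  · -- minus shift
    have hupd : Function.update β j₀ (β j₀ - 1) = Function.update β j₀ (β j₀ + (-1)) := by
      rw [sub_eq_add_neg]
    have he1 : -(Complex.I * ((θs j₀ : ℝ) : ℂ) * (-1)) = Complex.I * ((θs j₀ : ℝ) : ℂ) := by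
      ring
    have hfm : fhSymbol m θs α (Function.update β j₀ (β j₀ - 1)) Vc
        = fun θ : ℝ => (-Complex.exp (Complex.I * ((θs j₀ : ℝ) : ℂ))) *
            (Complex.exp (-(Complex.I * (θ : ℂ))) * f θ) := by
      funext θ
      have he2 : Complex.I * ((θ : ℝ) : ℂ) * (-1) = -(Complex.I * ((θ : ℝ) : ℂ)) := by
        ring
      rw [hupd, fhSymbol_update m θs α β Vc j₀ (-1) (Or.inr rfl) θ, he1, he2]
    unfold toeplitzDet
    have hM : (Matrix.of fun j k : Fin n =>
        fCoeff (fhSymbol m θs α (Function.update β j₀ (β j₀ - 1)) Vc) ((j:ℤ) - (k:ℤ)))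
        = (-Complex.exp (Complex.I * ((θs j₀ : ℝ) : ℂ))) •
          (Matrix.of fun j k : Fin n => fCoeff f ((j:ℤ) - (k:ℤ) + 1)) := by
      ext j k
      simp only [Matrix.smul_apply, Matrix.of_apply, smul_eq_mul]
      rw [hfm, fCoeff_shift_minus]
    have hT : (Matrix.of fun j k : Fin n => fCoeff f ((j:ℤ) - (k:ℤ) + 1))
        = Matrix.transpose (Matrix.of fun j k : Fin n => (fun kk : ℤ => fCoeff f (-kk)) ((j:ℤ) - (k:ℤ) - 1)) := by
      ext j k
      simp only [Matrix.transpose_apply, Matrix.of_apply]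
      congr 1
      ring
    have hrel' : ∀ j : Fin n, ∑ l ∈ Finset.range (n+1),
        Φhat.coeff l * (fun kk : ℤ => fCoeff f (-kk)) ((j : ℤ) - l) = 0 := by
      intro j
      rw [← rel_of_opuc_rev hΦhat j]
      apply Finset.sum_congr rfl
      intro l _
      simp only
      congr 2
      ring
    have hT2 : (Matrix.of fun j k : Fin n => (fun kk : ℤ => fCoeff f (-kk)) ((j:ℤ) - (k:ℤ)))
        = Matrix.transpose (Matrix.of fun j k : Fin n => fCoeff f ((j:ℤ) - (k:ℤ))) := by
      ext j k
      simp only [Matrix.transpose_apply, Matrix.of_apply]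
      congr 1
      ring
    rw [hM, Matrix.det_smul, hT, Matrix.det_transpose,
      key_det n (fun kk : ℤ => fCoeff f (-kk)) (fun l => Φhat.coeff l) hcnQ hrel',
      hT2, Matrix.det_transpose,
      ← Polynomial.coeff_zero_eq_eval_zero, Fintype.card_fin]
    have h2 := hpow (Complex.exp (Complex.I * ((θs j₀ : ℝ) : ℂ)))
    set Dn := Matrix.det (Matrix.of fun j k : Fin n => fCoeff f ((j:ℤ) - (k:ℤ)))
    linear_combination (Φhat.coeff 0 * Dn) * h2
end
end

section
/- Let m ≥ 0, q ∈ ℝ, and b_0,…,b_m ∈ ℝ satisfy −1/2 < b_j − q ≤ 1/2 for all j. Let k_0,…,k_m be integers with Σ_{j=0}^m k_j = 0 and not all k_j equal to zero. Then Σ_{j=0}^m (b_j + k_j)² > Σ_{j=0}^m b_j². In particular, the tuple (0,…,0) is the unique integer tuple with zero sum minimizing Σ_j (b_j + n_j)². -/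
open Finset

lemma zs_term_nonneg (c : ℝ) (hc1 : -(1/2 : ℝ) < c) (hc2 : c ≤ 1/2) (k : ℤ) :
    0 ≤ (k : ℝ) * (k + 2 * c) := by
  rcases lt_trichotomy k 0 with h | h | h
  · have hk2 : k ≤ -1 := by omega
    have hk : (k : ℝ) ≤ -1 := by exact_mod_cast hk2
    nlinarith
  · simp [h]
  · have hk : (1 : ℝ) ≤ k := by exact_mod_cast h
    nlinarith

lemma zs_term_pos (c : ℝ) (hc1 : -(1/2 : ℝ) < c) (hc2 : c ≤ 1/2) (k : ℤ) (hk : 0 < k) :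
    0 < (k : ℝ) * (k + 2 * c) := by
  have hk1 : (1 : ℝ) ≤ k := by exact_mod_cast hk
  nlinarith

lemma zs_strict (m : ℕ) (q : ℝ) (b : Fin (m+1) → ℝ)
    (hb : ∀ j, -(1/2 : ℝ) < b j - q ∧ b j - q ≤ 1/2)
    (k : Fin (m+1) → ℤ) (hsum : (∑ j, k j) = 0) (hne : k ≠ 0) :
    (∑ j, b j ^ 2) < ∑ j, (b j + (k j : ℝ)) ^ 2 := by
  have hcast : (∑ j, (k j : ℝ)) = 0 := by
    have := congrArg (fun z : ℤ => (z : ℝ)) hsum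
    push_cast at this
    simpa using this
  have key : (∑ j, (b j + (k j : ℝ)) ^ 2)
      = (∑ j, b j ^ 2) + (∑ j, (k j : ℝ) * (k j + 2 * (b j - q)))
        + 2 * q * (∑ j, (k j : ℝ)) := by
    rw [Finset.mul_sum, ← Finset.sum_add_distrib, ← Finset.sum_add_distrib]
    exact Finset.sum_congr rfl fun j _ => by ring
  -- there is a positive k j
  have hpos : ∃ j, 0 < k j := by
    by_contra h
    push_neg at h
    apply hne
    funext j
    have := (Finset.sum_eq_zero_iff_of_nonpos (fun i _ => h i)).mp hsum j (Finset.mem_univ j)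
    simpa using this
  obtain ⟨j0, hj0⟩ := hpos
  have hsum_pos : 0 < ∑ j, (k j : ℝ) * (k j + 2 * (b j - q)) := by
    apply Finset.sum_pos' (fun i _ => zs_term_nonneg _ (hb i).1 (hb i).2 _)
    exact ⟨j0, Finset.mem_univ j0, zs_term_pos _ (hb j0).1 (hb j0).2 _ hj0⟩
  rw [key, hcast]
  linarith

/-- If all `b_j` lie in a half-open interval `(q - 1/2, q + 1/2]` of length 1, then
any nontrivial zero-sum integer shift strictly increases `Σ_j (b_j + k_j)²`; in
particular the zero tuple is the unique zero-sum minimizer of `Σ_j (b_j + n_j)²`. -/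
theorem zero_sum_shift_strict_min
    (m : ℕ) (q : ℝ) (b : Fin (m+1) → ℝ)
    (hb : ∀ j, -(1/2 : ℝ) < b j - q ∧ b j - q ≤ 1/2)
    (k : Fin (m+1) → ℤ) (hsum : (∑ j, k j) = 0) (hne : k ≠ 0) :
    ((∑ j, b j ^ 2) < ∑ j, (b j + (k j : ℝ)) ^ 2) ∧
      ∀ n : Fin (m+1) → ℤ, (∑ j, n j) = 0 →
        ((∑ j, (b j + (n j : ℝ)) ^ 2) ≤ ∑ j, b j ^ 2) → n = 0 := by
  refine ⟨zs_strict m q b hb k hsum hne, fun n hn hle => ?_⟩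
  by_contra hne'
  exact absurd hle (not_le.mpr (zs_strict m q b hb n hn hne'))
end

section
/- Let m ≥ 0, q ∈ ℝ, and b_0,…,b_m ∈ ℝ satisfy −1/2 ≤ b_j − q ≤ 1/2 for all j. Let k_0,…,k_m be integers with Σ_{j=0}^m k_j = 0. Then Σ_{j=0}^m (b_j + k_j)² ≥ Σ_{j=0}^m b_j². -/
open Finset

/-- If all `b_j` lie in a closed interval `[q - 1/2, q + 1/2]` of length 1, then any
zero-sum integer shift does not decrease `Σ_j (b_j + k_j)²`. -/
theorem zero_sum_shift_min
    (m : ℕ) (q : ℝ) (b : Fin (m+1) → ℝ)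
    (hb : ∀ j, -(1/2 : ℝ) ≤ b j - q ∧ b j - q ≤ 1/2)
    (k : Fin (m+1) → ℤ) (hsum : (∑ j, k j) = 0) :
    (∑ j, b j ^ 2) ≤ ∑ j, (b j + (k j : ℝ)) ^ 2 := by
  have hk0 : (∑ j, (k j : ℝ)) = 0 := by exact_mod_cast hsum
  have key : ∀ j, 0 ≤ (k j : ℝ) ^ 2 + 2 * (b j - q) * (k j : ℝ) := by
    intro j
    obtain ⟨h1, h2⟩ := hb j
    have habs : |(k j : ℝ)| ≤ (k j : ℝ) ^ 2 := by
      rcases eq_or_ne (k j) 0 with h | h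
      · simp [h]
      · have h1 : (1 : ℝ) ≤ |(k j : ℝ)| := by
          have := Int.one_le_abs h
          calc (1:ℝ) ≤ ((|k j| : ℤ) : ℝ) := by exact_mod_cast this
            _ = |(k j : ℝ)| := by push_cast; rfl
        calc |(k j : ℝ)| = 1 * |(k j : ℝ)| := by ring
          _ ≤ |(k j : ℝ)| * |(k j : ℝ)| :=
              mul_le_mul_of_nonneg_right h1 (abs_nonneg _)
          _ = (k j : ℝ) ^ 2 := by rw [← abs_mul, ← sq, abs_sq]
    have hle := le_abs_self (k j : ℝ)
    have hge := neg_abs_le (k j : ℝ)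
    nlinarith
  have hsplit : (∑ j, (b j + (k j : ℝ)) ^ 2) - (∑ j, b j ^ 2)
      = (∑ j, ((k j : ℝ) ^ 2 + 2 * (b j - q) * (k j : ℝ)))
        + 2 * q * (∑ j, (k j : ℝ)) := by
    rw [Finset.mul_sum, ← Finset.sum_add_distrib, ← Finset.sum_sub_distrib]
    exact Finset.sum_congr rfl fun j _ => by ring
  have hnn : 0 ≤ ∑ j, ((k j : ℝ) ^ 2 + 2 * (b j - q) * (k j : ℝ)) :=
    Finset.sum_nonneg fun j _ => key j
  rw [hk0, mul_zero, add_zero] at hsplit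
  linarith
end

section
/- For every n ≥ 1, the Hankel determinant of the constant weight 1 on [−1,1] satisfies det(∫_{−1}^1 x^{j+k} dx)_{j,k=0}^{n−1} = 2^{n²} Π_{k=0}^{n−1} k!³/(n+k)!. -/
open Complex Real Filter Finset

noncomputable section


lemma det_eq_of_forall_col_eq_smul_add_const {n R : Type*} [DecidableEq n] [Fintype n]
    [CommRing R] {A B : Matrix n n R} (c : n → R) (k : n)
    (hk : c k = 0) (A_eq : ∀ i j, A i j = B i j + c j * B i k) : A.det = B.det := by
  rw [← Matrix.det_transpose A, ← Matrix.det_transpose B]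
  exact Matrix.det_eq_of_forall_row_eq_smul_add_const c k hk fun i j => A_eq j i

lemma det_cauchy (x y : ℕ → ℂ) :
    ∀ m : ℕ, (∀ i j, i < m → j < m → x i + y j ≠ 0) →
    Matrix.det (Matrix.of fun i j : Fin m => (x (i : ℕ) + y (j : ℕ))⁻¹) =
      (∏ j ∈ range m, ∏ i ∈ range j, ((x j - x i) * (y j - y i))) /
      ∏ i ∈ range m, ∏ j ∈ range m, (x i + y j) := by
  intro m
  induction m with
  | zero => simp
  | succ m ih =>
    intro h
    set lst : Fin (m + 1) := Fin.last m with hlst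
    have hco : (lst : ℕ) = m := rfl
    -- matrices
    set N2 : Matrix (Fin (m+1)) (Fin (m+1)) ℂ :=
      Matrix.of (fun i j : Fin (m+1) => if i = lst then 1 else (x (i:ℕ) + y (j:ℕ))⁻¹) with hN2
    set N4 : Matrix (Fin (m+1)) (Fin (m+1)) ℂ :=
      Matrix.of (fun i j : Fin (m+1) => if i = lst then (if j = lst then 1 else 0)
        else (if j = lst then 1 else (x (i:ℕ) + y (j:ℕ))⁻¹)) with hN4
    have hne : ∀ i j : Fin (m+1), x (i:ℕ) + y (j:ℕ) ≠ 0 := fun i j =>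
      h _ _ i.isLt j.isLt
    have hlt : ∀ i : Fin (m+1), i ≠ lst → (i:ℕ) < m := by
      intro i hi
      exact Fin.val_lt_last hi
    -- Step 1 : row operations
    have step1 : Matrix.det (Matrix.of fun i j : Fin (m+1) => (x (i:ℕ) + y (j:ℕ))⁻¹)
        = Matrix.det (Matrix.of fun i j : Fin (m+1) =>
          (x m + y (j:ℕ))⁻¹ * ((if i = lst then 1 else (x m - x (i:ℕ))) * N2 i j)) := by
      apply Matrix.det_eq_of_forall_row_eq_smul_add_const
        (fun i => if i = lst then 0 else 1) lst (by simp)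
      intro i j
      by_cases hi : i = lst
      · subst hi
        simp [hN2, hco]
      · simp only [hi, if_false, Matrix.of_apply, hN2, if_pos rfl, if_true]
        have h1 := hne i j
        have h2 : x m + y (j:ℕ) ≠ 0 := h _ _ (Nat.lt_succ_self m) j.isLt
        field_simp
        ring
    -- Step 2 : column operations on N2
    have step2 : N2.det = Matrix.det (Matrix.of fun i j : Fin (m+1) =>
        (if i = lst then 1 else (x (i:ℕ) + y m)⁻¹) *
          ((if j = lst then 1 else (y m - y (j:ℕ))) * N4 i j)) := by
      apply det_eq_of_forall_col_eq_smul_add_const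
        (fun j => if j = lst then 0 else 1) lst (by simp)
      intro i j
      by_cases hi : i = lst <;> by_cases hj : j = lst
      · subst hi; subst hj; simp [hN2, hN4]
      · subst hi; simp [hN2, hN4, hj]
      · subst hj; simp [hN2, hN4, hi, hco]
      · simp only [hN2, hN4, Matrix.of_apply, hi, hj, if_false, if_true]
        have h1 := hne i j
        have h2 : x (i:ℕ) + y m ≠ 0 := h _ _ i.isLt (Nat.lt_succ_self m)
        field_simp
        ring
    -- Step 3 : expansion of N4 along last row
    have step3 : N4.det = Matrix.det (Matrix.of fun i j : Fin m => (x (i:ℕ) + y (j:ℕ))⁻¹) := by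
      rw [Matrix.det_succ_row N4 lst]
      rw [Finset.sum_eq_single lst]
      · have : ((lst:ℕ) + (lst:ℕ)) = m + m := rfl
        rw [this]
        have he : (-1 : ℂ) ^ (m + m) = 1 := Even.neg_one_pow ⟨m, rfl⟩
        rw [he]
        have h4 : N4 lst lst = 1 := by simp [hN4]
        rw [h4]
        rw [one_mul, one_mul]
        congr 1
        ext i j
        have hi : (Fin.castSucc i) ≠ lst := (Fin.castSucc_lt_last i).ne
        have hj : (Fin.castSucc j) ≠ lst := (Fin.castSucc_lt_last j).ne
        simp only [hlst, Fin.succAbove_last]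
        simp [hN4, ← hlst, hi, hj]
      · intro j _ hj
        have : N4 lst j = 0 := by simp [hN4, hj]
        rw [this]
        ring
      · simp
    -- assemble
    have e1 : Matrix.det (Matrix.of fun i j : Fin (m+1) =>
          (x m + y (j:ℕ))⁻¹ * ((if i = lst then 1 else (x m - x (i:ℕ))) * N2 i j))
        = (∏ j : Fin (m+1), (x m + y (j:ℕ))⁻¹) *
          Matrix.det (Matrix.of fun i j : Fin (m+1) =>
            (if i = lst then 1 else (x m - x (i:ℕ))) * N2 i j) :=
      Matrix.det_mul_row _ _
    have e2 : Matrix.det (Matrix.of fun i j : Fin (m+1) =>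
          (if i = lst then 1 else (x m - x (i:ℕ))) * N2 i j)
        = (∏ i : Fin (m+1), (if i = lst then 1 else (x m - x (i:ℕ)))) * N2.det :=
      Matrix.det_mul_column _ _
    have e3 : Matrix.det (Matrix.of fun i j : Fin (m+1) =>
          (if i = lst then 1 else (x (i:ℕ) + y m)⁻¹) *
            ((if j = lst then 1 else (y m - y (j:ℕ))) * N4 i j))
        = (∏ i : Fin (m+1), (if i = lst then 1 else (x (i:ℕ) + y m)⁻¹)) *
          Matrix.det (Matrix.of fun i j : Fin (m+1) =>
            (if j = lst then 1 else (y m - y (j:ℕ))) * N4 i j) :=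
      Matrix.det_mul_column _ _
    have e4 : Matrix.det (Matrix.of fun i j : Fin (m+1) =>
          (if j = lst then 1 else (y m - y (j:ℕ))) * N4 i j)
        = (∏ j : Fin (m+1), (if j = lst then 1 else (y m - y (j:ℕ)))) * N4.det :=
      Matrix.det_mul_row _ _
    -- product computations
    have pcast : ∀ (f : ℕ → ℂ), (∏ i : Fin (m+1), (if i = lst then 1 else f (i:ℕ)))
        = ∏ i ∈ range m, f i := by
      intro f
      rw [Fin.prod_univ_castSucc, if_pos hlst.symm, mul_one, ← Fin.prod_univ_eq_prod_range f]
      refine Finset.prod_congr rfl fun i _ => ?_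
      have hi : i.castSucc ≠ lst := by rw [hlst]; exact (Fin.castSucc_lt_last i).ne
      rw [if_neg hi, Fin.coe_castSucc]
    have P1 : (∏ j : Fin (m+1), (x m + y (j:ℕ))⁻¹)
        = (∏ j ∈ range (m+1), (x m + y j))⁻¹ := by
      rw [Finset.prod_inv_distrib, Fin.prod_univ_eq_prod_range (fun j => x m + y j)]
    have P2 := pcast (fun i => x m - x i)
    have P3 : (∏ i : Fin (m+1), (if i = lst then 1 else (x (i:ℕ) + y m)⁻¹))
        = (∏ i ∈ range m, (x i + y m))⁻¹ := by
      rw [pcast (fun i => (x i + y m)⁻¹), Finset.prod_inv_distrib]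
    have P4 := pcast (fun j => y m - y j)
    have ihh := ih (fun i j hi hj => h i j (hi.trans (Nat.lt_succ_self m))
      (hj.trans (Nat.lt_succ_self m)))
    -- nonzeroness
    have A1 : (∏ j ∈ range (m+1), (x m + y j)) ≠ 0 :=
      Finset.prod_ne_zero_iff.2 fun j hj => h m j (Nat.lt_succ_self m) (Finset.mem_range.1 hj)
    have A2 : (∏ i ∈ range m, (x i + y m)) ≠ 0 :=
      Finset.prod_ne_zero_iff.2 fun i hi =>
        h i m ((Finset.mem_range.1 hi).trans (Nat.lt_succ_self m)) (Nat.lt_succ_self m)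
    have A3 : (∏ i ∈ range m, ∏ j ∈ range m, (x i + y j)) ≠ 0 :=
      Finset.prod_ne_zero_iff.2 fun i hi => Finset.prod_ne_zero_iff.2 fun j hj =>
        h i j ((Finset.mem_range.1 hi).trans (Nat.lt_succ_self m))
          ((Finset.mem_range.1 hj).trans (Nat.lt_succ_self m))
    rw [step1, e1, e2, step2, e3, e4, step3, ihh, P1, P2, P3, P4]
    rw [Finset.prod_range_succ (fun j => ∏ i ∈ range j, ((x j - x i) * (y j - y i))) m]
    rw [Finset.prod_range_succ (fun i => ∏ j ∈ range (m+1), (x i + y j)) m]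
    rw [Finset.prod_congr rfl (fun i (_ : i ∈ range m) =>
      Finset.prod_range_succ (fun j => x i + y j) m), Finset.prod_mul_distrib,
      Finset.prod_mul_distrib]
    field_simp

noncomputable def muC (m : ℕ) : ℂ := if Even m then 2 / ((m : ℂ) + 1) else 0


/-- product of first `k` odd numbers -/
def odp (k : ℕ) : ℕ := ∏ j ∈ range k, (2 * j + 1)

def PoddN (a b : ℕ) : ℕ := ∏ j ∈ Finset.Ico a b, (2 * j + 1)

def T1 (p : ℕ) : ℕ := ∏ i ∈ range p, ∏ j ∈ range p, (2 * i + 2 * j + 1)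

def T3 (p : ℕ) : ℕ := ∏ i ∈ range p, ∏ j ∈ range p, (2 * i + 2 * j + 3)

lemma odp_mul_PoddN {a b : ℕ} (h : a ≤ b) : odp a * PoddN a b = odp b :=
  Finset.prod_range_mul_prod_Ico _ h

lemma doubleFact (k : ℕ) : Nat.factorial (2 * k) = 2 ^ k * Nat.factorial k * odp k := by
  induction k with
  | zero => simp [odp]
  | succ k ih =>
    have h1 : 2 * (k + 1) = (2 * k + 1) + 1 := by ring
    rw [h1, Nat.factorial_succ, Nat.factorial_succ, ih]
    simp only [odp, Finset.prod_range_succ, Nat.factorial_succ]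
    ring

lemma T1_eq (p : ℕ) : T1 p = ∏ i ∈ range p, PoddN i (i + p) := by
  refine Finset.prod_congr rfl fun i _ => ?_
  rw [PoddN, Finset.prod_Ico_eq_prod_range]
  simp only [Nat.add_sub_cancel_left]
  refine Finset.prod_congr rfl fun j _ => by ring

lemma T3_eq (p : ℕ) : T3 p = ∏ i ∈ range p, PoddN (i + 1) (i + 1 + p) := by
  refine Finset.prod_congr rfl fun i _ => ?_
  rw [PoddN, Finset.prod_Ico_eq_prod_range]
  simp only [Nat.add_sub_cancel_left]
  refine Finset.prod_congr rfl fun j _ => by ring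

lemma I1 (q : ℕ) : T1 (q + 1) = T3 q * PoddN q (2 * q + 1) * odp q := by
  rw [T1_eq, T3_eq, Finset.prod_range_succ]
  have h1 : ∀ i, i ∈ range q → PoddN i (i + (q + 1)) = (2 * i + 1) * PoddN (i + 1) (i + 1 + q) := by
    intro i _
    rw [PoddN, show i + (q + 1) = i + 1 + q from by omega,
      Finset.prod_eq_prod_Ico_succ_bot (show i < i + 1 + q from by omega)]
    rfl
  rw [Finset.prod_congr rfl h1, Finset.prod_mul_distrib]
  have h2 : q + (q + 1) = 2 * q + 1 := by ring
  rw [h2, odp]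
  ring

lemma I2 (p : ℕ) : T1 p * PoddN p (2 * p) = T3 p * odp p := by
  rw [T1_eq, T3_eq]
  have key : (∏ i ∈ range p, PoddN i (i + p)) * PoddN p (2 * p)
      = (∏ i ∈ range p, PoddN (i + 1) (i + 1 + p)) * odp p := by
    have h1 : ∀ i, PoddN i (i + p) * (2 * (i + p) + 1) = (2 * i + 1) * PoddN (i + 1) (i + 1 + p) := by
      intro i
      have e1 : PoddN i (i + p) * (2 * (i + p) + 1) = PoddN i (i + p + 1) := by
        rw [PoddN, PoddN, Finset.prod_Ico_succ_top (by omega)]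
      have e2 : PoddN i (i + p + 1) = (2 * i + 1) * PoddN (i + 1) (i + 1 + p) := by
        rw [PoddN, Finset.prod_eq_prod_Ico_succ_bot (show i < i + p + 1 from by omega),
          PoddN, show i + 1 + p = i + p + 1 from by omega]
      rw [e1, e2]
    have h2 : ∏ i ∈ range p, (PoddN i (i + p) * (2 * (i + p) + 1))
        = ∏ i ∈ range p, ((2 * i + 1) * PoddN (i + 1) (i + 1 + p)) :=
      Finset.prod_congr rfl fun i _ => h1 i
    rw [Finset.prod_mul_distrib, Finset.prod_mul_distrib] at h2
    have h3 : ∏ i ∈ range p, (2 * (i + p) + 1) = PoddN p (2 * p) := by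
      rw [PoddN, Finset.prod_Ico_eq_prod_range]
      have : 2 * p - p = p := by omega
      rw [this]
      refine Finset.prod_congr rfl fun j _ => by ring
    rw [h3] at h2
    rw [h2, odp]
    ring
  exact key


lemma odp_succ (k : ℕ) : odp (k + 1) = odp k * (2 * k + 1) := Finset.prod_range_succ _ k

lemma odp_pos (k : ℕ) : 0 < odp k := Finset.prod_pos fun j _ => by omega
lemma PoddN_pos (a b : ℕ) : 0 < PoddN a b := Finset.prod_pos fun j _ => by omega
lemma T1_pos (p : ℕ) : 0 < T1 p :=
  Finset.prod_pos fun i _ => Finset.prod_pos fun j _ => by omega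
lemma T3_pos (p : ℕ) : 0 < T3 p :=
  Finset.prod_pos fun i _ => Finset.prod_pos fun j _ => by omega

lemma E2 (q : ℕ) : 2 ^ (2 * q + 1) * Nat.factorial q ^ 2 * Nat.factorial (2 * (2 * q)) *
      Nat.factorial (2 * (2 * q) + 1) * odp q ^ 2
    = 2 ^ (4 * q + 1) * Nat.factorial (2 * q) ^ 4 * odp (2 * q + 1) * odp (2 * q) := by
  rw [Nat.factorial_succ (2 * (2 * q)), doubleFact (2 * q), odp_succ (2 * q), doubleFact q]
  ring

lemma E3 (q : ℕ) : 2 ^ (2 * q + 1) * Nat.factorial q ^ 2 * Nat.factorial (2 * (2 * q + 1)) *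
      Nat.factorial (2 * (2 * q + 1) + 1) * odp (q + 1) ^ 2
    = 2 ^ (4 * q + 3) * Nat.factorial (2 * q + 1) ^ 4 * odp (2 * q + 1) * odp (2 * q + 2) := by
  rw [Nat.factorial_succ (2 * (2 * q + 1)), doubleFact (2 * q + 1),
    show odp (2 * q + 2) = odp (2 * q + 1) * (2 * (2 * q + 1) + 1) from odp_succ (2 * q + 1),
    odp_succ q, show Nat.factorial (2 * q + 1) = (2 * q + 1) * Nat.factorial (2 * q) from
      Nat.factorial_succ (2 * q), doubleFact q]
  ring

lemma coreN (n : ℕ) :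
    2 ^ (2 * (n / 2) + 1) * Nat.factorial (n / 2) ^ 2 *
        Nat.factorial (2 * n) * Nat.factorial (2 * n + 1) *
        T1 ((n + 1) / 2) * T3 (n / 2)
      = 2 ^ (2 * n + 1) * Nat.factorial n ^ 4 * T1 (n / 2 + 1) * T3 ((n + 1) / 2) := by
  rcases Nat.even_or_odd n with he | ho
  · obtain ⟨q, rfl⟩ : ∃ q, n = 2 * q := ⟨n / 2, by rcases he with ⟨r, hr⟩; omega⟩
    rw [show (2 * q) / 2 = q from by omega, show (2 * q + 1) / 2 = q from by omega]
    set Z := PoddN q (2 * q) * odp q ^ 2 with hZ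
    have hZpos : 0 < Z := Nat.mul_pos (PoddN_pos _ _) (pow_pos (odp_pos q) _)
    refine Nat.eq_of_mul_eq_mul_right hZpos ?_
    calc 2 ^ (2 * q + 1) * Nat.factorial q ^ 2 * Nat.factorial (2 * (2 * q)) *
            Nat.factorial (2 * (2 * q) + 1) * T1 q * T3 q * Z
        = (2 ^ (2 * q + 1) * Nat.factorial q ^ 2 * Nat.factorial (2 * (2 * q)) *
            Nat.factorial (2 * (2 * q) + 1) * odp q ^ 2) * ((T1 q * PoddN q (2 * q)) * T3 q) := by
          rw [hZ]; ring
      _ = (2 ^ (4 * q + 1) * Nat.factorial (2 * q) ^ 4 * odp (2 * q + 1) * odp (2 * q)) *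
            ((T3 q * odp q) * T3 q) := by rw [E2 q, I2 q]
      _ = (2 ^ (4 * q + 1) * Nat.factorial (2 * q) ^ 4) * (T3 q ^ 2) *
            (odp q * PoddN q (2 * q + 1)) * (odp q * PoddN q (2 * q)) * odp q := by
          rw [odp_mul_PoddN (show q ≤ 2 * q + 1 by omega),
            odp_mul_PoddN (show q ≤ 2 * q by omega)]
          ring
      _ = 2 ^ (2 * (2 * q) + 1) * Nat.factorial (2 * q) ^ 4 * T1 (q + 1) * T3 q * Z := by
          rw [I1 q, hZ]; ring
  · obtain ⟨q, rfl⟩ : ∃ q, n = 2 * q + 1 := ho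
    rw [show (2 * q + 1) / 2 = q from by omega, show (2 * q + 1 + 1) / 2 = q + 1 from by omega]
    set Z := PoddN (q + 1) (2 * (q + 1)) * PoddN q (2 * q + 1) * odp q * odp (q + 1) with hZ
    have hZpos : 0 < Z :=
      Nat.mul_pos (Nat.mul_pos (Nat.mul_pos (PoddN_pos _ _) (PoddN_pos _ _)) (odp_pos q))
        (odp_pos (q + 1))
    refine Nat.eq_of_mul_eq_mul_right hZpos ?_
    calc 2 ^ (2 * q + 1) * Nat.factorial q ^ 2 * Nat.factorial (2 * (2 * q + 1)) *
            Nat.factorial (2 * (2 * q + 1) + 1) * T1 (q + 1) * T3 q * Z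
        = (2 ^ (2 * q + 1) * Nat.factorial q ^ 2 * Nat.factorial (2 * (2 * q + 1)) *
            Nat.factorial (2 * (2 * q + 1) + 1) * odp (q + 1)) *
            ((T1 (q + 1) * PoddN (q + 1) (2 * (q + 1)))) * T3 q *
            (odp q * PoddN q (2 * q + 1)) := by rw [hZ]; ring
      _ = (2 ^ (2 * q + 1) * Nat.factorial q ^ 2 * Nat.factorial (2 * (2 * q + 1)) *
            Nat.factorial (2 * (2 * q + 1) + 1) * odp (q + 1) ^ 2) *
            (T3 (q + 1) * T3 q * odp (2 * q + 1)) := by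
          rw [I2 (q + 1), odp_mul_PoddN (show q ≤ 2 * q + 1 by omega)]
          ring
      _ = (2 ^ (4 * q + 3) * Nat.factorial (2 * q + 1) ^ 4 * odp (2 * q + 1) * odp (2 * q + 2)) *
            (T3 (q + 1) * T3 q * odp (2 * q + 1)) := by rw [E3 q]
      _ = (2 ^ (4 * q + 3) * Nat.factorial (2 * q + 1) ^ 4) * (T3 q * T3 (q + 1)) *
            ((odp q * PoddN q (2 * q + 1)) ^ 2) *
            (odp (q + 1) * PoddN (q + 1) (2 * (q + 1))) := by
          rw [odp_mul_PoddN (show q ≤ 2 * q + 1 by omega),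
            odp_mul_PoddN (show q + 1 ≤ 2 * (q + 1) by omega),
            show 2 * (q + 1) = 2 * q + 2 from by ring]
          ring
      _ = 2 ^ (2 * (2 * q + 1) + 1) * Nat.factorial (2 * q + 1) ^ 4 * T1 (q + 1) * T3 (q + 1)
            * Z := by rw [I1 q, hZ]; ring


lemma prod_two_mul_sub (j : ℕ) : ∏ i ∈ range j, (2 * (j - i)) = 2 ^ j * Nat.factorial j := by
  rw [Finset.prod_mul_distrib, Finset.prod_const]
  congr 1
  · simp
  · rw [← Finset.prod_range_add_one_eq_factorial j, ← Finset.prod_range_reflect (fun i => i + 1) j]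
    refine Finset.prod_congr rfl fun i hi => ?_
    have := Finset.mem_range.1 hi
    omega

/-- numerator of the Cauchy determinant for `x j = 2j`, any `y` with `y j - y i = 2(j-i)` -/
lemma cauchy_num (c : ℂ) (p : ℕ) :
    (∏ j ∈ range p, ∏ i ∈ range j,
        ((2 * (j:ℂ) - 2 * (i:ℂ)) * ((2 * (j:ℂ) + c) - (2 * (i:ℂ) + c))))
      = ((∏ j ∈ range p, (2 ^ j * Nat.factorial j) : ℕ) : ℂ) ^ 2 := by
  have step : ∀ j ∈ range p, (∏ i ∈ range j,
      ((2 * (j:ℂ) - 2 * (i:ℂ)) * ((2 * (j:ℂ) + c) - (2 * (i:ℂ) + c))))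
      = (((2 ^ j * Nat.factorial j : ℕ)) : ℂ) ^ 2 := by
    intro j _
    have h1 : ∀ i ∈ range j, ((2 * (j:ℂ) - 2 * (i:ℂ)) * ((2 * (j:ℂ) + c) - (2 * (i:ℂ) + c)))
        = ((2 * (j - i) : ℕ) : ℂ) ^ 2 := by
      intro i hi
      have hij := Finset.mem_range.1 hi
      have hc : ((j - i : ℕ) : ℂ) = (j : ℂ) - (i : ℂ) := by
        push_cast [Nat.cast_sub hij.le]
        ring
      push_cast [hc]
      ring
    rw [Finset.prod_congr rfl h1, Finset.prod_pow, ← Nat.cast_prod, prod_two_mul_sub j]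
  rw [Finset.prod_congr rfl step, Finset.prod_pow, ← Nat.cast_prod]

lemma exp_eq (p : ℕ) : p + (∑ i ∈ range p, i) * 2 = p ^ 2 := by
  rw [Finset.sum_range_id_mul_two]
  cases p with
  | zero => rfl
  | succ k => rw [Nat.succ_sub_one]; ring

lemma sfpow (p : ℕ) : ((∏ j ∈ range p, (2 ^ j * Nat.factorial j) : ℕ) : ℂ)
    = 2 ^ (∑ i ∈ range p, i) * ((∏ j ∈ range p, Nat.factorial j : ℕ) : ℂ) := by
  push_cast
  rw [Finset.prod_mul_distrib, Finset.prod_pow_eq_pow_sum]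

lemma detA (p : ℕ) :
    Matrix.det (Matrix.of fun a b : Fin p => muC (2 * (a : ℕ) + 2 * (b : ℕ)))
      = 2 ^ (p ^ 2) * ((∏ j ∈ range p, Nat.factorial j : ℕ) : ℂ) ^ 2 / ((T1 p : ℕ) : ℂ) := by
  have hx : ∀ i j : ℕ, (2 * (i:ℂ)) + (2 * (j:ℂ) + 1) ≠ 0 := by
    intro i j
    have : (2 * (i:ℂ)) + (2 * (j:ℂ) + 1) = ((2 * i + 2 * j + 1 : ℕ) : ℂ) := by push_cast; ring
    rw [this]
    exact Nat.cast_ne_zero.2 (by omega)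
  have hM : (Matrix.of fun a b : Fin p => muC (2 * (a : ℕ) + 2 * (b : ℕ)))
      = (2 : ℂ) • Matrix.of (fun a b : Fin p =>
          ((fun i : ℕ => 2 * (i:ℂ)) (a : ℕ) + (fun j : ℕ => 2 * (j:ℂ) + 1) (b : ℕ))⁻¹) := by
    ext a b
    have he : Even (2 * (a:ℕ) + 2 * (b:ℕ)) := ⟨(a:ℕ) + (b:ℕ), by ring⟩
    simp only [Matrix.of_apply, Matrix.smul_apply, muC, if_pos he, smul_eq_mul]
    rw [div_eq_mul_inv]
    congr 1
    push_cast
    ring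
  rw [hM, Matrix.det_smul, Fintype.card_fin,
    det_cauchy (fun i : ℕ => 2 * (i:ℂ)) (fun j : ℕ => 2 * (j:ℂ) + 1) p
      (fun i j _ _ => hx i j)]
  rw [cauchy_num 1 p, sfpow p]
  have hden : (∏ i ∈ range p, ∏ j ∈ range p, (2 * (i:ℂ) + (2 * (j:ℂ) + 1)))
      = ((T1 p : ℕ) : ℂ) := by
    rw [T1]
    push_cast
    refine Finset.prod_congr rfl fun i _ => Finset.prod_congr rfl fun j _ => by ring
  rw [hden]
  rw [mul_pow, ← pow_mul, ← exp_eq p, pow_add]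
  ring

lemma detB (q : ℕ) :
    Matrix.det (Matrix.of fun a b : Fin q => muC ((2 * (a : ℕ) + 1) + (2 * (b : ℕ) + 1)))
      = 2 ^ (q ^ 2) * ((∏ j ∈ range q, Nat.factorial j : ℕ) : ℂ) ^ 2 / ((T3 q : ℕ) : ℂ) := by
  have hx : ∀ i j : ℕ, (2 * (i:ℂ)) + (2 * (j:ℂ) + 3) ≠ 0 := by
    intro i j
    have : (2 * (i:ℂ)) + (2 * (j:ℂ) + 3) = ((2 * i + 2 * j + 3 : ℕ) : ℂ) := by push_cast; ring
    rw [this]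
    exact Nat.cast_ne_zero.2 (by omega)
  have hM : (Matrix.of fun a b : Fin q => muC ((2 * (a : ℕ) + 1) + (2 * (b : ℕ) + 1)))
      = (2 : ℂ) • Matrix.of (fun a b : Fin q =>
          ((fun i : ℕ => 2 * (i:ℂ)) (a : ℕ) + (fun j : ℕ => 2 * (j:ℂ) + 3) (b : ℕ))⁻¹) := by
    ext a b
    have he : Even ((2 * (a:ℕ) + 1) + (2 * (b:ℕ) + 1)) := ⟨(a:ℕ) + (b:ℕ) + 1, by ring⟩
    simp only [Matrix.of_apply, Matrix.smul_apply, muC, if_pos he, smul_eq_mul]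
    rw [div_eq_mul_inv]
    congr 1
    push_cast
    ring
  rw [hM, Matrix.det_smul, Fintype.card_fin,
    det_cauchy (fun i : ℕ => 2 * (i:ℂ)) (fun j : ℕ => 2 * (j:ℂ) + 3) q
      (fun i j _ _ => hx i j)]
  rw [cauchy_num 3 q, sfpow q]
  have hden : (∏ i ∈ range q, ∏ j ∈ range q, (2 * (i:ℂ) + (2 * (j:ℂ) + 3)))
      = ((T3 q : ℕ) : ℂ) := by
    rw [T3]
    push_cast
    refine Finset.prod_congr rfl fun i _ => Finset.prod_congr rfl fun j _ => by ring
  rw [hden]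
  rw [mul_pow, ← pow_mul, ← exp_eq q, pow_add]
  ring


/-! ### integral entries -/

lemma entry (m : ℕ) : (∫ x in (-1:ℝ)..1, (x:ℂ)^m * 1) = muC m := by
  simp only [mul_one]
  have h1 : (fun x : ℝ => (x:ℂ)^m) = fun x : ℝ => ((x^m : ℝ) : ℂ) := by
    funext x; push_cast; ring
  have h2 : (∫ x in (-1:ℝ)..1, ((x^m : ℝ) : ℂ)) = ((∫ x in (-1:ℝ)..1, x^m : ℝ) : ℂ) :=
    RCLike.intervalIntegral_ofReal
  rw [h1, h2, integral_pow]
  rcases Nat.even_or_odd m with he | ho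
  · have h2 : (-1:ℝ)^(m+1) = -1 := (Even.add_one he).neg_one_pow
    rw [muC, if_pos he, one_pow, h2]
    push_cast
    norm_num
  · have h2 : (-1:ℝ)^(m+1) = 1 := by
      rcases ho with ⟨k, hk⟩
      subst hk
      rw [show 2*k+1+1 = 2*(k+1) from by ring, pow_mul]
      norm_num
    rw [muC, if_neg (Nat.not_even_iff_odd.2 ho), one_pow, h2]
    norm_num

/-! ### parity equiv and block splitting -/

def parityEquiv (n : ℕ) : Fin ((n+1)/2) ⊕ Fin (n/2) ≃ Fin n where
  toFun := Sum.elim (fun a => ⟨2 * (a:ℕ), by have := a.isLt; omega⟩)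
    (fun b => ⟨2 * (b:ℕ) + 1, by have := b.isLt; omega⟩)
  invFun := fun k => if h : (k:ℕ) % 2 = 0 then Sum.inl ⟨(k:ℕ)/2, by have := k.isLt; omega⟩
    else Sum.inr ⟨(k:ℕ)/2, by have := k.isLt; omega⟩
  left_inv := by
    rintro (a | b) <;> dsimp only [Sum.elim_inl, Sum.elim_inr]
    · rw [dif_pos (by omega)]
      exact congrArg Sum.inl (Fin.ext (by dsimp only; omega))
    · rw [dif_neg (by omega)]
      exact congrArg Sum.inr (Fin.ext (by dsimp only; omega))
  right_inv := by
    intro k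
    dsimp only
    by_cases h : (k:ℕ) % 2 = 0
    · rw [dif_pos h, Sum.elim_inl]
      exact Fin.ext (by dsimp only; omega)
    · rw [dif_neg h, Sum.elim_inr]
      exact Fin.ext (by dsimp only; omega)

lemma detM (n : ℕ) :
    Matrix.det (Matrix.of fun j k : Fin n => muC ((j:ℕ) + (k:ℕ)))
      = Matrix.det (Matrix.of fun a b : Fin ((n+1)/2) => muC (2 * (a : ℕ) + 2 * (b : ℕ)))
        * Matrix.det (Matrix.of fun a b : Fin (n/2) =>
            muC ((2 * (a : ℕ) + 1) + (2 * (b : ℕ) + 1))) := by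
  rw [← Matrix.det_submatrix_equiv_self (parityEquiv n)]
  have hsub : (Matrix.of fun j k : Fin n => muC ((j:ℕ) + (k:ℕ))).submatrix
        (parityEquiv n) (parityEquiv n)
      = Matrix.fromBlocks
          (Matrix.of fun a b : Fin ((n+1)/2) => muC (2 * (a : ℕ) + 2 * (b : ℕ))) 0 0
          (Matrix.of fun a b : Fin (n/2) => muC ((2 * (a : ℕ) + 1) + (2 * (b : ℕ) + 1))) := by
    ext i j
    rcases i with a | a <;> rcases j with b | b
    · rfl
    · show muC (2 * (a:ℕ) + (2 * (b:ℕ) + 1)) = 0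
      simp only [muC]
      rw [if_neg (by rintro ⟨t, ht⟩; omega)]
    · show muC ((2 * (a:ℕ) + 1) + 2 * (b:ℕ)) = 0
      simp only [muC]
      rw [if_neg (by rintro ⟨t, ht⟩; omega)]
    · rfl
  rw [hsub, Matrix.det_fromBlocks_zero₁₂]

/-! ### the key induction -/

lemma keyN : ∀ n : ℕ,
    2 ^ (((n+1)/2) ^ 2 + (n/2) ^ 2) * (∏ j ∈ range ((n+1)/2), Nat.factorial j) ^ 2 *
        (∏ j ∈ range (n/2), Nat.factorial j) ^ 2 * (∏ k ∈ Finset.Ico n (2*n), Nat.factorial k)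
      = 2 ^ (n ^ 2) * (∏ k ∈ range n, Nat.factorial k ^ 3) * T1 ((n+1)/2) * T3 (n/2) := by
  intro n
  induction n with
  | zero => simp [T1, T3]
  | succ n ih =>
    have hp : (n + 1 + 1) / 2 = n / 2 + 1 := by omega
    have hq : (n + 1) / 2 = (n + 1) / 2 := rfl
    rw [hp]
    set p := (n + 1) / 2 with hpdef
    set q := n / 2 with hqdef
    -- multiply by X := n! * T1 p * T3 q and cancel
    have hX : 0 < Nat.factorial n * T1 p * T3 q :=
      Nat.mul_pos (Nat.mul_pos n.factorial_pos (T1_pos p)) (T3_pos q)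
    refine Nat.eq_of_mul_eq_mul_right hX ?_
    have hIF : (∏ k ∈ Finset.Ico (n+1) (2*(n+1)), Nat.factorial k) * Nat.factorial n
        = (∏ k ∈ Finset.Ico n (2*n), Nat.factorial k)
          * Nat.factorial (2*n) * Nat.factorial (2*n+1) := by
      have e1 : (∏ k ∈ Finset.Ico n (2*(n+1)), Nat.factorial k)
          = Nat.factorial n * ∏ k ∈ Finset.Ico (n+1) (2*(n+1)), Nat.factorial k :=
        Finset.prod_eq_prod_Ico_succ_bot (by omega) _
      have e2 : (∏ k ∈ Finset.Ico n (2*(n+1)), Nat.factorial k)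
          = ((∏ k ∈ Finset.Ico n (2*n), Nat.factorial k) * Nat.factorial (2*n))
            * Nat.factorial (2*n+1) := by
        rw [show 2*(n+1) = (2*n+1)+1 from by ring,
          Finset.prod_Ico_succ_top (by omega), Finset.prod_Ico_succ_top (by omega)]
      rw [← e2, e1]
      ring
    have hsf : (∏ j ∈ range (q+1), Nat.factorial j)
        = (∏ j ∈ range q, Nat.factorial j) * Nat.factorial q := Finset.prod_range_succ _ _
    have hPF : (∏ k ∈ range (n+1), Nat.factorial k ^ 3)
        = (∏ k ∈ range n, Nat.factorial k ^ 3) * Nat.factorial n ^ 3 :=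
      Finset.prod_range_succ _ _
    have hcore := coreN n
    rw [← hpdef, ← hqdef] at hcore
    calc 2 ^ ((q+1) ^ 2 + p ^ 2) * (∏ j ∈ range (q+1), Nat.factorial j) ^ 2 *
            (∏ j ∈ range p, Nat.factorial j) ^ 2 *
            (∏ k ∈ Finset.Ico (n+1) (2*(n+1)), Nat.factorial k) *
            (Nat.factorial n * T1 p * T3 q)
        = 2 ^ (p ^ 2 + q ^ 2) * 2 ^ (2*q+1) *
            ((∏ j ∈ range q, Nat.factorial j) * Nat.factorial q) ^ 2 *
            (∏ j ∈ range p, Nat.factorial j) ^ 2 *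
            ((∏ k ∈ Finset.Ico (n+1) (2*(n+1)), Nat.factorial k) * Nat.factorial n) *
            (T1 p * T3 q) := by
          rw [hsf, show (q+1)^2 + p^2 = (p^2 + q^2) + (2*q+1) from by ring, pow_add]
          ring
      _ = 2 ^ (p ^ 2 + q ^ 2) * 2 ^ (2*q+1) *
            ((∏ j ∈ range q, Nat.factorial j) * Nat.factorial q) ^ 2 *
            (∏ j ∈ range p, Nat.factorial j) ^ 2 *
            ((∏ k ∈ Finset.Ico n (2*n), Nat.factorial k)
              * Nat.factorial (2*n) * Nat.factorial (2*n+1)) *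
            (T1 p * T3 q) := by rw [hIF]
      _ = (2 ^ (p ^ 2 + q ^ 2) * (∏ j ∈ range p, Nat.factorial j) ^ 2 *
            (∏ j ∈ range q, Nat.factorial j) ^ 2 * ∏ k ∈ Finset.Ico n (2*n), Nat.factorial k) *
            (2 ^ (2 * q + 1) * Nat.factorial q ^ 2 *
              Nat.factorial (2*n) * Nat.factorial (2*n+1) * T1 p * T3 q) := by ring
      _ = (2 ^ (n ^ 2) * (∏ k ∈ range n, Nat.factorial k ^ 3) * T1 p * T3 q) *
            (2 ^ (2 * n + 1) * Nat.factorial n ^ 4 * T1 (q + 1) * T3 p) := by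
          rw [ih, hcore]
      _ = 2 ^ ((n+1) ^ 2) * (∏ k ∈ range (n+1), Nat.factorial k ^ 3) * T1 (q+1) * T3 p *
            (Nat.factorial n * T1 p * T3 q) := by
          rw [hPF, show (n+1)^2 = n^2 + (2*n+1) from by ring, pow_add]
          ring


/-- The `n`-dimensional Hankel determinant of a weight `w` on `[-1,1]`. -/
def hankelDet (w : ℝ → ℂ) (n : ℕ) : ℂ :=
  Matrix.det (Matrix.of fun j k : Fin n =>
    ∫ x in (-1:ℝ)..1, (x : ℂ) ^ ((j : ℕ) + (k : ℕ)) * w x)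

/-- The Hankel determinant of the constant weight `1` on `[-1,1]`:
`D_n(1) = 2^{n²} Π_{k=0}^{n-1} k!³/(n+k)!`. -/
theorem hankel_det_one (n : ℕ) (hn : 1 ≤ n) :
    hankelDet (fun _ => 1) n =
      2 ^ (n ^ 2) * ∏ k ∈ Finset.range n,
        ((Nat.factorial k : ℂ)) ^ 3 / ((Nat.factorial (n + k) : ℂ)) := by

  have h1 : hankelDet (fun _ => 1) n
      = Matrix.det (Matrix.of fun j k : Fin n => muC ((j:ℕ) + (k:ℕ))) := by
    unfold hankelDet
    congr 1
    ext j k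
    exact entry _
  rw [h1, detM n, detA, detB]
  have hT1 : ((T1 ((n+1)/2) : ℕ) : ℂ) ≠ 0 := Nat.cast_ne_zero.2 (T1_pos _).ne'
  have hT3 : ((T3 (n/2) : ℕ) : ℂ) ≠ 0 := Nat.cast_ne_zero.2 (T3_pos _).ne'
  have hIF : (∏ k ∈ Finset.Ico n (2*n), (Nat.factorial k : ℂ)) ≠ 0 :=
    Finset.prod_ne_zero_iff.2 fun k _ => Nat.cast_ne_zero.2 k.factorial_pos.ne'
  have hR : (∏ k ∈ Finset.range n, ((Nat.factorial k : ℂ)) ^ 3 / ((Nat.factorial (n + k) : ℂ)))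
      = (∏ k ∈ Finset.range n, (Nat.factorial k : ℂ) ^ 3) /
        (∏ k ∈ Finset.Ico n (2*n), (Nat.factorial k : ℂ)) := by
    rw [Finset.prod_div_distrib]
    congr 1
    rw [Finset.prod_Ico_eq_prod_range, show 2*n - n = n from by omega]
  rw [hR, div_mul_div_comm, ← mul_div_assoc,
    div_eq_div_iff (mul_ne_zero hT1 hT3) hIF]
  have hcast := congrArg (Nat.cast : ℕ → ℂ) (keyN n)
  push_cast at hcast
  push_cast
  linear_combination hcast
end
end
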